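/- arXiv:2104.06562 — 5 statements merged into one kernel-verified Lean document; each statement's English description precedes it below -/
import Mathlib

section
/- Let ψ:(0,∞)→(0,∞) be nonincreasing with ψ(x)→0 as x→∞, and set λ(ψ) = liminf_{x→∞} (−log ψ(x))/log x. Then the Hausdorff dimension of W(ψ) is at most min(4/λ(ψ), 2). -/
open Complex MeasureTheory Filter Set Topology
open scoped ENNReal

noncomputable section

/-- The fundamental domain `𝔇 = {x+iy : x,y ∈ [-1/2,1/2)}`. -/
def fund : Set ℂ := {z : ℂ | z.re ∈ Set.Ico (-(1:ℝ)/2) (1/2) ∧ z.im ∈ Set.Ico (-(1:ℝ)/2) (1/2)}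

/-- `𝔇* = 𝔇 \ {0}`. -/
def fundStar : Set ℂ := fund \ {0}

/-- Nearest Gaussian integer `[z]`, the unique Gaussian integer with `z - [z] ∈ 𝔇`. -/
def nearestGauss (z : ℂ) : ℂ :=
  ((⌊z.re + 1/2⌋ : ℤ) : ℂ) + ((⌊z.im + 1/2⌋ : ℤ) : ℂ) * Complex.I

/-- The Hurwitz map `T(z) = 1/z - [1/z]` (with `T 0 = 0`). -/
def hT (z : ℂ) : ℂ := 1/z - nearestGauss (1/z)

/-- HCF partial quotient `a_{n+1}(z) = [1 / T^n(z)]` (0-based index). -/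
def hA (z : ℂ) (n : ℕ) : ℂ := nearestGauss (1 / (hT^[n] z))

/-- `z` is a Gaussian integer. -/
def IsGaussInt (z : ℂ) : Prop := ∃ a b : ℤ, z = (a : ℂ) + (b : ℂ) * Complex.I

/-- The set `I = {a ∈ ℤ[i] : |a| ≥ √2}` of possible partial quotients. -/
def setI : Set ℂ := {a : ℂ | IsGaussInt a ∧ Real.sqrt 2 ≤ ‖a‖}

/-- The matrix `((p(u), p(u⁻)), (q(u), q(u⁻))) = ((0,1),(1,0)) * ∏ ((u_j,1),(1,0))`. -/
def cfMatrix (u : List ℂ) : Matrix (Fin 2) (Fin 2) ℂ :=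
  !![0, 1; 1, 0] * (u.map fun a => !![a, 1; 1, 0]).prod

/-- Continuant numerator `p(u)`. -/
def contP (u : List ℂ) : ℂ := cfMatrix u 0 0

/-- Continuant denominator `q(u)`. -/
def contQ (u : List ℂ) : ℂ := cfMatrix u 1 0

/-- The cylinder `C(u) = {z ∈ 𝔇 : a_1(z) = u_1, …, a_n(z) = u_n}`. -/
def cylinder (u : List ℂ) : Set ℂ :=
  {z ∈ fund | ∀ j : Fin u.length, hA z j = u.get j}

/-- The prototype set `𝔇_u = T^n(C(u))`. -/
def proto (u : List ℂ) : Set ℂ := hT^[u.length] '' cylinder u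

/-- The Möbius transformation `T_u : z ↦ (p(u⁻) z + p(u)) / (q(u⁻) z + q(u))`. -/
def moebiusT (u : List ℂ) (z : ℂ) : ℂ :=
  (cfMatrix u 0 1 * z + cfMatrix u 0 0) / (cfMatrix u 1 1 * z + cfMatrix u 1 0)

/-- `u` is full if `𝔇_u = 𝔇`. -/
def FullSeq (u : List ℂ) : Prop := proto u = fund

/-- `u` is regular if `𝔇_u` has nonempty interior. -/
def RegularSeq (u : List ℂ) : Prop := (interior (proto u)).Nonempty

/-- The length of the (finite) HCF expansion of a Gaussian rational `w ∈ 𝔇*`: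
the least `N` with `T^N(w) = 0`. -/
def hcfLength (w : ℂ) : ℕ := sInf {N : ℕ | hT^[N] w = 0}

/-- `dd(z, w)`: the number of indices `1 ≤ n ≤ N` where the HCF partial quotients of `z`
and of the Gaussian rational `w` (with expansion of length `N`) differ. -/
def ddiff (z w : ℂ) : ℕ := {n : ℕ | n < hcfLength w ∧ hA z n ≠ hA w n}.ncard

/-- The sequence `v_k = (3, -2i)` followed by `k` repetitions of `(-2, 2i, -2, -2i)`. -/
def vSeq (k : ℕ) : List ℂ :=
  [3, -2*Complex.I] ++ (List.replicate k [-2, 2*Complex.I, -2, -2*Complex.I]).flatten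

/-- The sequence `ṽ_k = (3+i, 2i)` followed by `k` repetitions of `(-2+i, 2i, -2+i, 2i)`. -/
def vtSeq (k : ℕ) : List ℂ :=
  [3+Complex.I, 2*Complex.I] ++
    (List.replicate k [-2+Complex.I, 2*Complex.I, -2+Complex.I, 2*Complex.I]).flatten

/-- The lower order `λ(ψ) = liminf_{x→∞} (-log ψ(x)) / log x`, valued in `ℝ≥0∞`. -/
def lambdaPsi (ψ : ℝ → ℝ) : ℝ≥0∞ :=
  Filter.liminf (fun x : ℝ => ENNReal.ofReal (-Real.log (ψ x) / Real.log x)) Filter.atTop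

/-- The set `E(ψ)` of `z ∈ 𝔇*` admitting infinitely many Gaussian rational approximations
`p/q` with `|z - p/q| ≤ ψ(|q|)` whose HCF expansions differ from that of `z` in more and
more places. -/
def Epsi (ψ : ℝ → ℝ) : Set ℂ :=
  {z : ℂ | z ∈ fundStar ∧ ∃ p q : ℕ → ℂ,
    (∀ n, IsGaussInt (p n) ∧ IsGaussInt (q n) ∧ q n ≠ 0 ∧
      ‖z - p n / q n‖ ≤ ψ ‖q n‖) ∧
    Function.Injective (fun n => p n / q n) ∧
    Filter.Tendsto (fun n => ddiff z (p n / q n)) Filter.atTop Filter.atTop}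

/-- The `ψ`-approximable set `W(ψ)`. -/
def Wpsi (ψ : ℝ → ℝ) : Set ℂ :=
  {z : ℂ | z ∈ fundStar ∧ {pq : ℂ × ℂ | IsGaussInt pq.1 ∧ IsGaussInt pq.2 ∧ pq.2 ≠ 0 ∧
    ‖z - pq.1 / pq.2‖ ≤ ψ ‖pq.2‖}.Infinite}

end


noncomputable section

def gaussMk (v : Fin 2 → ℤ) : ℂ := (v 0 : ℂ) + (v 1 : ℂ) * Complex.I

lemma gaussMk_re (v : Fin 2 → ℤ) : (gaussMk v).re = v 0 := by simp [gaussMk]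
lemma gaussMk_im (v : Fin 2 → ℤ) : (gaussMk v).im = v 1 := by simp [gaussMk]

lemma isGaussInt_iff' {z : ℂ} : IsGaussInt z ↔ ∃ v : Fin 2 → ℤ, z = gaussMk v := by
  constructor
  · rintro ⟨a, b, rfl⟩; exact ⟨![a, b], by simp [gaussMk]⟩
  · rintro ⟨v, rfl⟩; exact ⟨v 0, v 1, rfl⟩

lemma norm_le_abs_gaussMk (v : Fin 2 → ℤ) : ‖v‖ ≤ ‖gaussMk v‖ := by
  rw [pi_norm_le_iff_of_nonneg (norm_nonneg _), Fin.forall_fin_two]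
  constructor
  · rw [Int.norm_eq_abs, ← gaussMk_re v]; exact Complex.abs_re_le_norm _
  · rw [Int.norm_eq_abs, ← gaussMk_im v]; exact Complex.abs_im_le_norm _

lemma abs_gaussMk_le (v : Fin 2 → ℤ) : ‖gaussMk v‖ ≤ 2 * ‖v‖ := by
  calc ‖gaussMk v‖ ≤ |(gaussMk v).re| + |(gaussMk v).im| :=
        Complex.norm_le_abs_re_add_abs_im _
    _ ≤ ‖v‖ + ‖v‖ := by
        rw [gaussMk_re, gaussMk_im]
        gcongr
        · rw [← Int.norm_eq_abs]; exact norm_le_pi_norm v 0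
        · rw [← Int.norm_eq_abs]; exact norm_le_pi_norm v 1
    _ = 2 * ‖v‖ := by ring

lemma one_le_norm_of_ne_zero {v : Fin 2 → ℤ} (hv : v ≠ 0) : 1 ≤ ‖v‖ := by
  obtain ⟨i, hi⟩ := Function.ne_iff.mp hv
  calc (1:ℝ) ≤ ‖v i‖ := by
        rw [Int.norm_eq_abs]; exact_mod_cast Int.one_le_abs hi
    _ ≤ ‖v‖ := norm_le_pi_norm v i

lemma one_le_abs_gaussMk {v : Fin 2 → ℤ} (hv : v ≠ 0) : 1 ≤ ‖gaussMk v‖ :=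
  (one_le_norm_of_ne_zero hv).trans (norm_le_abs_gaussMk v)

lemma gaussBall_finite (R : ℝ) : {w : ℂ | IsGaussInt w ∧ ‖w‖ ≤ R}.Finite := by
  have hsub : {w : ℂ | IsGaussInt w ∧ ‖w‖ ≤ R} ⊆
      gaussMk '' ((Fintype.piFinset fun _ : Fin 2 =>
        Finset.Icc (-(⌈R⌉₊ : ℤ)) (⌈R⌉₊ : ℤ)) : Set (Fin 2 → ℤ)) := by
    rintro w ⟨hg, hR⟩
    obtain ⟨v, rfl⟩ := isGaussInt_iff'.mp hg
    refine ⟨v, ?_, rfl⟩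
    simp only [Finset.coe_sort_coe, Finset.mem_coe, Fintype.mem_piFinset, Finset.mem_Icc]
    intro i
    have h1 : ‖v i‖ ≤ R := le_trans (le_trans (norm_le_pi_norm v i) (norm_le_abs_gaussMk v)) hR
    rw [Int.norm_eq_abs] at h1
    have h2 : |(v i : ℝ)| ≤ (⌈R⌉₊ : ℝ) := h1.trans (Nat.le_ceil R)
    have h3 : |v i| ≤ (⌈R⌉₊ : ℤ) := by exact_mod_cast h2
    exact abs_le.mp h3
  exact Set.Finite.subset (Set.Finite.image _ (Finset.finite_toSet _)) hsub

lemma tsum_ofReal_norm_rpow_ne_top {r : ℝ} (hr : 2 < r) :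
    ∑' v : Fin 2 → ℤ, ENNReal.ofReal (‖v‖ ^ (-r)) ≠ ⊤ := by
  rw [← ENNReal.ofReal_tsum_of_nonneg (fun v => Real.rpow_nonneg (norm_nonneg _) _)
      (EisensteinSeries.summable_one_div_norm_rpow hr)]
  exact ENNReal.ofReal_ne_top

lemma ediam_closedBall_le (c : ℂ) (ρ : ℝ) :
    EMetric.diam (Metric.closedBall c ρ) ≤ ENNReal.ofReal (2 * ρ) := by
  apply EMetric.diam_le
  intro x hx y hy
  rw [Metric.mem_closedBall] at hx hy
  rw [edist_dist]
  exact ENNReal.ofReal_le_ofReal (by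
    have := dist_triangle x c y
    have h1 : dist c y = dist y c := dist_comm _ _
    linarith)


lemma abs_le_one_of_mem_fundStar {z : ℂ} (hz : z ∈ fundStar) : ‖z‖ ≤ 1 := by
  obtain ⟨⟨hre, him⟩, -⟩ := hz
  obtain ⟨h1, h2⟩ := hre
  obtain ⟨h3, h4⟩ := him
  calc ‖z‖ ≤ |z.re| + |z.im| := Complex.norm_le_abs_re_add_abs_im _
    _ ≤ 1/2 + 1/2 := by
        gcongr
        · rw [abs_le]; constructor <;> linarith
        · rw [abs_le]; constructor <;> linarith
    _ = 1 := by norm_num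



lemma measure_Wpsi_zero (ψ : ℝ → ℝ)
    (hpos : ∀ x : ℝ, 0 < x → 0 < ψ x)
    (hmono : ∀ x y : ℝ, 0 < x → x ≤ y → ψ y ≤ ψ x)
    (hlim : Filter.Tendsto ψ Filter.atTop (nhds 0))
    {t d : ℝ} (ht : 0 < t) (hd : 0 < d) (htd : 4 < t * d)
    {N₀ : ℕ} (hN₀ : 2 ≤ N₀) (hψ : ∀ x : ℝ, (N₀ : ℝ) ≤ x → ψ x ≤ x ^ (-t)) :
    μH[d] (Wpsi ψ) = 0 := by
  set r : ℝ := t * d / 2 with hrdef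
  have hr2 : 2 < r := by rw [hrdef]; linarith
  have hr0 : 0 < r := by linarith
  set eterm : (Fin 2 → ℤ) → ℝ≥0∞ := fun v => ENNReal.ofReal (‖v‖ ^ (-r)) with hetermdef
  set S : ℝ≥0∞ := ∑' v : Fin 2 → ℤ, eterm v with hSdef
  have hS : S ≠ ⊤ := tsum_ofReal_norm_rpow_ne_top hr2
  set pterm : (Fin 2 → ℤ) → ℝ≥0∞ := fun p => if p = 0 then 1 else eterm p with hptermdef
  set tailterm : ℕ → (Fin 2 → ℤ) → ℝ≥0∞ :=
    fun n q => if (n : ℝ) ≤ ‖gaussMk q‖ then eterm q else 0 with htailtermdef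
  set tailSum : ℕ → ℝ≥0∞ := fun n => ∑' q, tailterm n q with htailSumdef
  set P : ℝ≥0∞ := ∑' p, pterm p with hPdef
  set K : ℝ≥0∞ := ENNReal.ofReal (2 ^ d * 2 ^ r) with hKdef
  have hK : K ≠ ⊤ := ENNReal.ofReal_ne_top
  have hP : P ≤ 1 + S := by
    rw [hPdef, hSdef, ← tsum_ite_eq (0 : Fin 2 → ℤ) (fun _ => (1 : ℝ≥0∞)), ← ENNReal.tsum_add]
    apply ENNReal.tsum_le_tsum
    intro p
    by_cases hp : p = 0
    · simp [hptermdef, hp]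
    · simp [hptermdef, hp]
  have hPne : P ≠ ⊤ := by
    intro hPt
    rw [hPt] at hP
    exact (ENNReal.add_ne_top.mpr ⟨ENNReal.one_ne_top, hS⟩) (top_le_iff.mp hP)
  have htail_le : ∀ n q, tailterm n q ≤ eterm q := by
    intro n q
    simp only [htailtermdef]
    split_ifs <;> simp
  set tset : ℕ → (Fin 2 → ℤ) × (Fin 2 → ℤ) → Set ℂ := fun n i =>
    if (n : ℝ) ≤ ‖gaussMk i.2‖ ∧
        ‖gaussMk i.1‖ ≤ 2 * ‖gaussMk i.2‖
      then Metric.closedBall (gaussMk i.1 / gaussMk i.2) (ψ (‖gaussMk i.2‖))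
      else ∅ with htsetdef
  have hrad : Tendsto (fun n : ℕ => ENNReal.ofReal (2 * ψ n)) atTop (𝓝 0) := by
    have h1 : Tendsto (fun n : ℕ => 2 * ψ n) atTop (𝓝 0) := by
      simpa using (hlim.comp tendsto_natCast_atTop_atTop).const_mul (2 : ℝ)
    have h2 := ENNReal.tendsto_ofReal h1
    rwa [ENNReal.ofReal_zero] at h2
  have hdiam : ∀ᶠ n : ℕ in atTop, ∀ i, EMetric.diam (tset n i) ≤ ENNReal.ofReal (2 * ψ n) := by
    filter_upwards [eventually_ge_atTop 1] with n hn i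
    simp only [htsetdef]
    split_ifs with h
    · refine (ediam_closedBall_le _ _).trans (ENNReal.ofReal_le_ofReal ?_)
      have hq : (n : ℝ) ≤ ‖gaussMk i.2‖ := h.1
      have hn0 : (0 : ℝ) < n := by exact_mod_cast hn
      have := hmono n (‖gaussMk i.2‖) hn0 hq
      linarith
    · exact (le_of_eq Metric.ediam_empty).trans zero_le
  have hcover : ∀ᶠ n : ℕ in atTop, Wpsi ψ ⊆ ⋃ i, tset n i := by
    filter_upwards [eventually_ge_atTop N₀] with n hn z hz
    obtain ⟨hzf, hinf⟩ := hz
    have hz1 : ‖z‖ ≤ 1 := abs_le_one_of_mem_fundStar hzf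
    have hψ1 : 0 < ψ 1 := hpos 1 one_pos
    have hfin : ({w : ℂ | IsGaussInt w ∧ ‖w‖ ≤ (1 + ψ 1) * n} ×ˢ
        {w : ℂ | IsGaussInt w ∧ ‖w‖ ≤ (n : ℝ)}).Finite :=
      (gaussBall_finite _).prod (gaussBall_finite _)
    obtain ⟨⟨p, q⟩, hmem, hnot⟩ := (hinf.diff hfin).nonempty
    obtain ⟨hpg, hqg, hq0, happ⟩ := hmem
    simp only [Set.mem_setOf_eq] at happ
    obtain ⟨qv, rfl⟩ := isGaussInt_iff'.mp hqg
    obtain ⟨pv, rfl⟩ := isGaussInt_iff'.mp hpg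
    have hqv0 : qv ≠ 0 := by rintro rfl; exact hq0 (by simp [gaussMk])
    have habsq1 : 1 ≤ ‖gaussMk qv‖ := one_le_abs_gaussMk hqv0
    have habsq0 : 0 < ‖gaussMk qv‖ := lt_of_lt_of_le one_pos habsq1
    have hpq_le : ∀ B : ℝ, ψ (‖gaussMk qv‖) ≤ B →
        ‖gaussMk pv / gaussMk qv‖ ≤ 1 + B := by
      intro B hB
      have h1 : ‖gaussMk pv / gaussMk qv - z‖ ≤ ψ (‖gaussMk qv‖) := by
        rw [← norm_neg, neg_sub]; exact happ
      calc ‖gaussMk pv / gaussMk qv‖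
          = ‖gaussMk pv / gaussMk qv - z + z‖ := by rw [sub_add_cancel]
        _ ≤ ‖gaussMk pv / gaussMk qv - z‖ + ‖z‖ := norm_add_le _ _
        _ ≤ B + 1 := by linarith
        _ = 1 + B := by ring
    have habsp : ‖gaussMk pv‖ =
        ‖gaussMk pv / gaussMk qv‖ * ‖gaussMk qv‖ := by
      rw [norm_div]
      field_simp
    have hqbig : (n : ℝ) ≤ ‖gaussMk qv‖ := by
      by_contra hlt
      push_neg at hlt
      refine hnot ⟨⟨isGaussInt_iff'.mpr ⟨pv, rfl⟩, ?_⟩, isGaussInt_iff'.mpr ⟨qv, rfl⟩, hlt.le⟩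
      rw [habsp]
      have hψle : ψ (‖gaussMk qv‖) ≤ ψ 1 := hmono 1 _ one_pos habsq1
      have h2 := hpq_le (ψ 1) hψle
      have hn0 : (0 : ℝ) ≤ n := Nat.cast_nonneg n
      exact mul_le_mul h2 hlt.le habsq0.le (by linarith)
    have hNx : (N₀ : ℝ) ≤ ‖gaussMk qv‖ :=
      le_trans (by exact_mod_cast hn) hqbig
    have hψx : ψ (‖gaussMk qv‖) ≤ 1 := by
      refine (hψ _ hNx).trans (Real.rpow_le_one_of_one_le_of_nonpos ?_ (by linarith))
      calc (1 : ℝ) ≤ (N₀ : ℝ) := by exact_mod_cast (by omega : 1 ≤ N₀)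
        _ ≤ _ := hNx
    have hpbound : ‖gaussMk pv‖ ≤ 2 * ‖gaussMk qv‖ := by
      rw [habsp]
      have h2 := hpq_le 1 hψx
      nlinarith
    rw [Set.mem_iUnion]
    refine ⟨(pv, qv), ?_⟩
    simp only [htsetdef]
    rw [if_pos ⟨hqbig, hpbound⟩, Metric.mem_closedBall, Complex.dist_eq]
    exact happ
  have hsum : ∀ᶠ n : ℕ in atTop,
      (∑' i, EMetric.diam (tset n i) ^ d) ≤ K * P * tailSum n := by
    filter_upwards [eventually_ge_atTop N₀] with n hn
    have hterm : ∀ i : (Fin 2 → ℤ) × (Fin 2 → ℤ),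
        EMetric.diam (tset n i) ^ d ≤ K * (pterm i.1 * tailterm n i.2) := by
      rintro ⟨pv, qv⟩
      simp only [htsetdef]
      split_ifs with hcond
      · obtain ⟨hc1, hc2⟩ := hcond
        have hx2 : (2 : ℝ) ≤ ‖gaussMk qv‖ := by
          calc (2:ℝ) ≤ (N₀ : ℝ) := by exact_mod_cast hN₀
            _ ≤ (n : ℝ) := by exact_mod_cast hn
            _ ≤ _ := hc1
        have hqv0 : qv ≠ 0 := by
          rintro rfl
          simp [gaussMk] at hx2
          linarith
        set x : ℝ := ‖gaussMk qv‖ with hxdef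
        have hx0 : (0 : ℝ) < x := by linarith
        have hNx : (N₀ : ℝ) ≤ x := le_trans (by exact_mod_cast hn) hc1
        have hψx : ψ x ≤ x ^ (-t) := hψ x hNx
        have hψx0 : 0 < ψ x := hpos x hx0
        have hqnorm : 0 < ‖qv‖ := lt_of_lt_of_le one_pos (one_le_norm_of_ne_zero hqv0)
        have hqx : ‖qv‖ ≤ x := norm_le_abs_gaussMk qv
        have hmain : (2 * ψ x) ^ d ≤
            (2 ^ d * 2 ^ r) * ((if pv = 0 then (1:ℝ) else ‖pv‖ ^ (-r)) * ‖qv‖ ^ (-r)) := by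
          have hb1 : (2 * ψ x) ^ d ≤ (2 * x ^ (-t)) ^ d :=
            Real.rpow_le_rpow (by linarith) (by linarith) hd.le
          have hxt : (x ^ (-t)) ^ d = x ^ (-r) * x ^ (-r) := by
            rw [← Real.rpow_mul hx0.le, ← Real.rpow_add hx0]
            congr 1
            rw [hrdef]; ring
          have hq : x ^ (-r) ≤ ‖qv‖ ^ (-r) :=
            Real.rpow_le_rpow_of_nonpos hqnorm hqx (by linarith)
          have hpfac : x ^ (-r) ≤ 2 ^ r * (if pv = 0 then (1:ℝ) else ‖pv‖ ^ (-r)) := by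
            by_cases hp0 : pv = 0
            · rw [if_pos hp0]
              have ha : x ^ (-r) ≤ 1 :=
                Real.rpow_le_one_of_one_le_of_nonpos (by linarith) (by linarith)
              have hb : (1:ℝ) ≤ 2 ^ r := by
                simpa using
                  Real.rpow_le_rpow_of_exponent_le (by norm_num : (1:ℝ) ≤ 2) hr0.le
              nlinarith
            · rw [if_neg hp0]
              have hpnorm : 0 < ‖pv‖ := lt_of_lt_of_le one_pos (one_le_norm_of_ne_zero hp0)
              have hple : ‖pv‖ ≤ 2 * x := (norm_le_abs_gaussMk pv).trans hc2
              have h3 : ‖pv‖ / 2 ≤ x := by linarith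
              have h4 : x ^ (-r) ≤ (‖pv‖ / 2) ^ (-r) :=
                Real.rpow_le_rpow_of_nonpos (by linarith) h3 (by linarith)
              have h5 : (‖pv‖ / 2) ^ (-r) = 2 ^ r * ‖pv‖ ^ (-r) := by
                rw [Real.div_rpow (norm_nonneg _) (by norm_num : (0:ℝ) ≤ 2),
                    Real.rpow_neg (by norm_num : (0:ℝ) ≤ 2), div_inv_eq_mul, mul_comm]
              rw [← h5]
              exact h4
          calc (2 * ψ x) ^ d ≤ (2 * x ^ (-t)) ^ d := hb1
            _ = 2 ^ d * (x ^ (-r) * x ^ (-r)) := by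
                rw [Real.mul_rpow (by norm_num) (Real.rpow_nonneg hx0.le _), hxt]
            _ ≤ 2 ^ d * (‖qv‖ ^ (-r) * (2 ^ r * (if pv = 0 then (1:ℝ) else ‖pv‖ ^ (-r)))) := by
                refine mul_le_mul_of_nonneg_left ?_ (Real.rpow_nonneg (by norm_num) _)
                exact mul_le_mul hq hpfac (Real.rpow_nonneg hx0.le _)
                  (Real.rpow_nonneg (norm_nonneg _) _)
            _ = (2 ^ d * 2 ^ r) * ((if pv = 0 then (1:ℝ) else ‖pv‖ ^ (-r)) * ‖qv‖ ^ (-r)) := by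
                ring
        have hpay0 : (0:ℝ) ≤ (if pv = 0 then (1:ℝ) else ‖pv‖ ^ (-r)) := by
          split_ifs
          · norm_num
          · exact Real.rpow_nonneg (norm_nonneg _) _
        have hRHS : K * (pterm pv * tailterm n qv) =
            ENNReal.ofReal (2 ^ d * 2 ^ r) *
              (ENNReal.ofReal (if pv = 0 then (1:ℝ) else ‖pv‖ ^ (-r)) *
                ENNReal.ofReal (‖qv‖ ^ (-r))) := by
          simp only [hKdef, hptermdef, htailtermdef, hetermdef]
          rw [if_pos hc1]
          split_ifs with hp0
          · simp
          · rfl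
        calc EMetric.diam (Metric.closedBall (gaussMk pv / gaussMk qv) (ψ x)) ^ d
            ≤ ENNReal.ofReal (2 * ψ x) ^ d :=
              ENNReal.rpow_le_rpow (ediam_closedBall_le _ _) hd.le
          _ = ENNReal.ofReal ((2 * ψ x) ^ d) :=
              ENNReal.ofReal_rpow_of_nonneg (by linarith) hd.le
          _ ≤ ENNReal.ofReal ((2 ^ d * 2 ^ r) *
                ((if pv = 0 then (1:ℝ) else ‖pv‖ ^ (-r)) * ‖qv‖ ^ (-r))) :=
              ENNReal.ofReal_le_ofReal hmain
          _ = K * (pterm pv * tailterm n qv) := by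
              rw [ENNReal.ofReal_mul (by positivity : (0:ℝ) ≤ 2 ^ d * 2 ^ r),
                  ENNReal.ofReal_mul hpay0, hRHS]
      · rw [show EMetric.diam (∅ : Set ℂ) = 0 from Metric.ediam_empty, ENNReal.zero_rpow_of_pos hd]
        exact zero_le
    calc (∑' i, EMetric.diam (tset n i) ^ d)
        ≤ ∑' i : (Fin 2 → ℤ) × (Fin 2 → ℤ), K * (pterm i.1 * tailterm n i.2) :=
          ENNReal.tsum_le_tsum hterm
      _ = K * P * tailSum n := by
          rw [ENNReal.tsum_prod']
          have hinner : ∀ p : Fin 2 → ℤ,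
              (∑' q, K * (pterm p * tailterm n q)) = K * pterm p * tailSum n := by
            intro p
            rw [htailSumdef, ← ENNReal.tsum_mul_left]
            apply tsum_congr
            intro q
            ring
          calc (∑' p, ∑' q, K * (pterm p * tailterm n q))
              = ∑' p, K * pterm p * tailSum n := tsum_congr hinner
            _ = (∑' p, K * pterm p) * tailSum n := ENNReal.tsum_mul_right
            _ = K * P * tailSum n := by rw [ENNReal.tsum_mul_left]
  have hanti : Antitone tailSum := by
    intro m n hmn
    apply ENNReal.tsum_le_tsum
    intro q
    simp only [htailtermdef]
    split_ifs with h1 h2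
    · exact le_refl _
    · exact absurd (le_trans (by exact_mod_cast hmn) h1) h2
    · exact zero_le
    · exact le_refl _
  have hiInf : (⨅ n, tailSum n) = 0 := by
    set B : ℕ → Finset (Fin 2 → ℤ) :=
      fun m => Fintype.piFinset fun _ => Finset.Icc (-(m : ℤ)) (m : ℤ) with hBdef
    have hBmono : Monotone B := by
      intro a b hab
      apply Fintype.piFinset_subset
      intro i
      apply Finset.Icc_subset_Icc <;> omega
    have hBex : ∀ v : Fin 2 → ℤ, ∃ m, v ∈ B m := by
      intro v
      refine ⟨(v 0).natAbs + (v 1).natAbs, ?_⟩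
      simp only [hBdef, Fintype.mem_piFinset, Finset.mem_Icc]
      rw [Fin.forall_fin_two]
      refine ⟨⟨?_, ?_⟩, ?_, ?_⟩ <;> omega
    have hB : Tendsto B atTop atTop := tendsto_atTop_finset_of_monotone hBmono hBex
    have hcompl := (ENNReal.tendsto_tsum_compl_atTop_zero (f := eterm) hS).comp hB
    have hle : ∀ m, (⨅ n, tailSum n) ≤ ∑' q : {q : Fin 2 → ℤ // q ∉ B m}, eterm ↑q := by
      intro m
      refine (iInf_le _ (2 * m + 2)).trans ?_
      have heq : (∑' q : {q : Fin 2 → ℤ // q ∉ B m}, eterm ↑q)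
          = ∑' q, Set.indicator {q : Fin 2 → ℤ | q ∉ B m} eterm q :=
        tsum_subtype {q : Fin 2 → ℤ | q ∉ B m} eterm
      rw [htailSumdef, heq]
      apply ENNReal.tsum_le_tsum
      intro q
      by_cases hqB : q ∈ B m
      · rw [Set.indicator_of_notMem (by simp [hqB] : q ∉ {q : Fin 2 → ℤ | q ∉ B m})]
        have hqn : ‖q‖ ≤ (m : ℝ) := by
          rw [pi_norm_le_iff_of_nonneg (by positivity)]
          intro i
          rw [Int.norm_eq_abs]
          have hmem := (Fintype.mem_piFinset.mp hqB) i
          rw [Finset.mem_Icc] at hmem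
          rw [abs_le]
          constructor
          · exact_mod_cast hmem.1
          · exact_mod_cast hmem.2
        have hnle : ¬ ((2 * m + 2 : ℕ) : ℝ) ≤ ‖gaussMk q‖ := by
          push_neg
          calc ‖gaussMk q‖ ≤ 2 * ‖q‖ := abs_gaussMk_le q
            _ ≤ 2 * m := by linarith
            _ < ((2 * m + 2 : ℕ) : ℝ) := by push_cast; linarith
        simp only [htailtermdef, if_neg hnle, le_refl]
      · rw [Set.indicator_of_mem (by simp [hqB] : q ∈ {q : Fin 2 → ℤ | q ∉ B m})]
        exact htail_le _ _
    have h0 : (⨅ n, tailSum n) ≤ 0 := ge_of_tendsto' hcompl hle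
    exact le_antisymm h0 (zero_le)
  have htail0 : Tendsto tailSum atTop (𝓝 0) := by
    have := tendsto_atTop_iInf hanti
    rwa [hiInf] at this
  have hKP : K * P ≠ ⊤ := ENNReal.mul_ne_top hK hPne
  have hF0 : Tendsto (fun n => K * P * tailSum n) atTop (𝓝 0) := by
    have := ENNReal.Tendsto.const_mul htail0 (Or.inr hKP)
    rwa [mul_zero] at this
  have hmeas := Measure.hausdorffMeasure_le_liminf_tsum d (Wpsi ψ)
      (fun n : ℕ => ENNReal.ofReal (2 * ψ n)) hrad tset hdiam hcover
  have hliminf : liminf (fun n : ℕ => ∑' i, EMetric.diam (tset n i) ^ d) atTop = 0 := by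
    refine le_antisymm ?_ (zero_le)
    calc liminf (fun n : ℕ => ∑' i, EMetric.diam (tset n i) ^ d) atTop
        ≤ liminf (fun n => K * P * tailSum n) atTop := liminf_le_liminf hsum
      _ = 0 := hF0.liminf_eq
  exact le_antisymm (hliminf ▸ hmeas) (zero_le)


end

theorem hausdorff_dimension_Wpsi_upper (ψ : ℝ → ℝ)
    (hpos : ∀ x : ℝ, 0 < x → 0 < ψ x)
    (hmono : ∀ x y : ℝ, 0 < x → x ≤ y → ψ y ≤ ψ x)
    (hlim : Filter.Tendsto ψ Filter.atTop (nhds 0)) :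
    dimH (Wpsi ψ) ≤ min (4 / lambdaPsi ψ) 2 := by
  refine dimH_le fun d' hd' => le_min ?_ ?_
  · by_contra hcon
    push_neg at hcon
    have hd'0 : (d' : ℝ≥0∞) ≠ 0 := by
      intro h
      rw [h] at hcon
      exact (not_lt.mpr (zero_le)) hcon
    have hd'pos : (0 : ℝ) < (d' : ℝ) := by
      have h1 : 0 < d' := lt_of_le_of_ne (zero_le) (Ne.symm (by exact_mod_cast hd'0))
      exact_mod_cast h1
    have hlam : 4 / (d' : ℝ≥0∞) < lambdaPsi ψ := by
      rcases eq_or_ne (lambdaPsi ψ) ⊤ with hT | hT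
      · rw [hT]
        exact ENNReal.div_lt_top (by norm_num) hd'0
      · have hlam0 : lambdaPsi ψ ≠ 0 := by
          intro h
          rw [h, ENNReal.div_zero (by norm_num)] at hcon
          exact not_top_lt hcon
        rw [ENNReal.div_lt_iff (Or.inl hlam0) (Or.inl hT)] at hcon
        rw [ENNReal.div_lt_iff (Or.inl hd'0) (Or.inl ENNReal.coe_ne_top)]
        rwa [mul_comm] at hcon
    obtain ⟨tn, htn1, htn2⟩ := ENNReal.lt_iff_exists_nnreal_btwn.mp hlam
    have htpos : (0 : ℝ) < (tn : ℝ) := by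
      have h40 : (0 : ℝ≥0∞) < 4 / (d' : ℝ≥0∞) :=
        ENNReal.div_pos (by norm_num) ENNReal.coe_ne_top
      have h41 := lt_trans h40 htn1
      exact_mod_cast h41
    have htd : (4 : ℝ) < (tn : ℝ) * (d' : ℝ) := by
      rw [ENNReal.div_lt_iff (Or.inl hd'0) (Or.inl ENNReal.coe_ne_top)] at htn1
      have h6 : (4 : ℝ) < (tn : ℝ) * (d' : ℝ) := by exact_mod_cast htn1
      linarith
    have htn2' : (tn : ℝ≥0∞) <
        Filter.liminf (fun x : ℝ => ENNReal.ofReal (-Real.log (ψ x) / Real.log x))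
          Filter.atTop := htn2
    have hev := eventually_lt_of_lt_liminf htn2'
    obtain ⟨x₀, hx₀⟩ := eventually_atTop.mp hev
    obtain ⟨N₀, hN₀ge⟩ := exists_nat_ge (max x₀ 2)
    have hN₀2 : 2 ≤ N₀ := by
      have h5 : (2 : ℝ) ≤ (N₀ : ℝ) := le_trans (le_max_right _ _) hN₀ge
      exact_mod_cast h5
    have hψt : ∀ x : ℝ, (N₀ : ℝ) ≤ x → ψ x ≤ x ^ (-(tn : ℝ)) := by
      intro x hx
      have hx2 : (2 : ℝ) ≤ x := le_trans (le_trans (le_max_right _ _) hN₀ge) hx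
      have hx1 : (1 : ℝ) < x := by linarith
      have hx0 : (0 : ℝ) < x := by linarith
      have hxx := hx₀ x (le_trans (le_trans (le_max_left _ _) hN₀ge) hx)
      rw [← ENNReal.ofReal_coe_nnreal,
        ENNReal.ofReal_lt_ofReal_iff_of_nonneg (by positivity)] at hxx
      have hlogx : 0 < Real.log x := Real.log_pos hx1
      have h1 : (tn : ℝ) * Real.log x < -Real.log (ψ x) := (lt_div_iff₀ hlogx).mp hxx
      have hψxpos : 0 < ψ x := hpos x hx0
      have h2 : Real.log (ψ x) < Real.log x * (-(tn : ℝ)) := by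
        have h3 : Real.log x * (-(tn : ℝ)) = -((tn : ℝ) * Real.log x) := by ring
        rw [h3]
        linarith
      calc ψ x = Real.exp (Real.log (ψ x)) := (Real.exp_log hψxpos).symm
        _ ≤ Real.exp (Real.log x * (-(tn : ℝ))) := Real.exp_le_exp.mpr h2.le
        _ = x ^ (-(tn : ℝ)) := (Real.rpow_def_of_pos hx0 _).symm
    have h0 := measure_Wpsi_zero ψ hpos hmono hlim htpos hd'pos htd hN₀2 hψt
    rw [h0] at hd'
    simp at hd'
  · by_contra hcon
    push_neg at hcon
    have h2 : (2 : ℝ) < (d' : ℝ) := by exact_mod_cast hcon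
    have h0 : (μH[(d' : ℝ)] : Measure ℂ) = 0 :=
      Real.hausdorffMeasure_of_finrank_lt (by rw [Complex.finrank_real_complex]; exact_mod_cast h2)
    rw [h0] at hd'
    simp at hd'
end

section
/- Let x ∈ (0,1) be irrational and let p, q ∈ ℕ with |x − p/q| < 1/q². Let (a_n)_{n≥1} be the regular continued fraction partial quotients of x and (b_1,…,b_N) the regular continued fraction partial quotients of p/q (produced by the Gauss-map algorithm, so in particular b_N ≥ 2). Then a_k = b_k for all 1 ≤ k ≤ N−1. -/
open Complex MeasureTheory Filter Set
open scoped ENNReal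

noncomputable section

/-- The Gauss map `G(x) = 1/x - ⌊1/x⌋` (with `G 0 = 0`). -/
def gaussMap (x : ℝ) : ℝ := Int.fract (1/x)

/-- RCF partial quotient `a_{n+1}(x) = ⌊1 / G^n(x)⌋` (0-based index). -/
def rcfA (x : ℝ) (n : ℕ) : ℤ := ⌊1 / (gaussMap^[n] x)⌋

end

noncomputable section MyAux

/-- finite CF value with seed `s`: `hCF [b1,...,bm] s = [0; b1, ..., bm + s']`-ish. -/
def hCF : List ℤ → ℝ → ℝ
  | [], s => s
  | b :: l, s => 1 / ((b : ℝ) + hCF l s)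

/-- continuants `(p₂, p₁, q₂, q₁)` with `hCF l s = (p₂ s + p₁)/(q₂ s + q₁)`. -/
def cont4 : List ℤ → ℤ × ℤ × ℤ × ℤ
  | [] => (1, 0, 0, 1)
  | b :: l => ((cont4 l).2.2.1, (cont4 l).2.2.2,
      b * (cont4 l).2.2.1 + (cont4 l).1, b * (cont4 l).2.2.2 + (cont4 l).2.1)

/-- the Euclid-type recursion. -/
def euclidEnd : List ℤ → ℝ → ℝ → ℝ × ℝ
  | [], e₀, e₁ => (e₀, e₁)
  | b :: l, e₀, e₁ => euclidEnd l e₁ (e₀ - (b : ℝ) * e₁)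

lemma hCF_mem (l : List ℤ) (hl : ∀ b ∈ l, 1 ≤ b) {s : ℝ} (hs : s ∈ Set.Ioo (0:ℝ) 1) :
    hCF l s ∈ Set.Ioo (0:ℝ) 1 := by
  induction l with
  | nil => exact hs
  | cons b l ih =>
    have hb : (1:ℝ) ≤ (b:ℝ) := by exact_mod_cast hl b (by simp)
    have h := ih (fun c hc => hl c (by simp [hc]))
    have hpos : (1:ℝ) < (b:ℝ) + hCF l s := by
      have := h.1; linarith
    simp only [hCF]
    constructor
    · positivity
    · rw [div_lt_one (by linarith)]; linarith

lemma gauss_hCF (b : ℤ) (l : List ℤ) (hl : ∀ c ∈ (b :: l), 1 ≤ c) {s : ℝ}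
    (hs : s ∈ Set.Ioo (0:ℝ) 1) :
    gaussMap (hCF (b :: l) s) = hCF l s ∧ ⌊1 / hCF (b :: l) s⌋ = b := by
  have hb : (1:ℝ) ≤ (b:ℝ) := by exact_mod_cast hl b (by simp)
  have h := hCF_mem l (fun c hc => hl c (by simp [hc])) hs
  have hpos : (0:ℝ) < (b:ℝ) + hCF l s := by have := h.1; linarith
  have hinv : 1 / hCF (b :: l) s = (b:ℝ) + hCF l s := by
    simp only [hCF, one_div_one_div]
  constructor
  · unfold gaussMap
    rw [hinv, add_comm, Int.fract_add_intCast, Int.fract_eq_self.mpr ⟨le_of_lt h.1, h.2⟩]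
  · rw [hinv, add_comm, Int.floor_add_intCast, Int.floor_eq_zero_iff.mpr ⟨le_of_lt h.1, h.2⟩,
      zero_add]

lemma hCF_orbit (l : List ℤ) (hl : ∀ b ∈ l, 1 ≤ b) {s : ℝ} (hs : s ∈ Set.Ioo (0:ℝ) 1) :
    ∀ k, k ≤ l.length → gaussMap^[k] (hCF l s) = hCF (l.drop k) s := by
  induction l with
  | nil =>
    intro k hk
    simp only [List.length_nil, Nat.le_zero] at hk
    subst hk; simp
  | cons b l ih =>
    intro k hk
    match k with
    | 0 => simp
    | (k+1) =>
      rw [Function.iterate_succ_apply, (gauss_hCF b l hl hs).1]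
      simpa using ih (fun c hc => hl c (by simp [hc])) k (by simpa using hk)

lemma rcfA_hCF (l : List ℤ) (hl : ∀ b ∈ l, 1 ≤ b) {s : ℝ} (hs : s ∈ Set.Ioo (0:ℝ) 1)
    (k : ℕ) (hk : k < l.length) : rcfA (hCF l s) k = l[k] := by
  unfold rcfA
  rw [hCF_orbit l hl hs k (le_of_lt hk), List.drop_eq_getElem_cons hk]
  refine (gauss_hCF l[k] (l.drop (k+1)) (fun c hc => hl c ?_) hs).2
  rw [List.mem_cons] at hc
  rcases hc with hc | hc
  · rw [hc]; exact List.getElem_mem hk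
  · exact List.mem_of_mem_drop hc

lemma cont4_nonneg (l : List ℤ) (hl : ∀ b ∈ l, 1 ≤ b) :
    0 ≤ (cont4 l).1 ∧ 0 ≤ (cont4 l).2.1 ∧ 0 ≤ (cont4 l).2.2.1 ∧ 1 ≤ (cont4 l).2.2.2 := by
  induction l with
  | nil => simp [cont4]
  | cons b l ih =>
    have hb : (1:ℤ) ≤ b := hl b (by simp)
    obtain ⟨h1, h2, h3, h4⟩ := ih (fun c hc => hl c (by simp [hc]))
    simp only [cont4]
    refine ⟨h3, by linarith, by nlinarith, by nlinarith⟩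

lemma cont4_det (l : List ℤ) :
    (cont4 l).1 * (cont4 l).2.2.2 - (cont4 l).2.1 * (cont4 l).2.2.1 = 1 ∨
    (cont4 l).1 * (cont4 l).2.2.2 - (cont4 l).2.1 * (cont4 l).2.2.1 = -1 := by
  induction l with
  | nil => simp [cont4]
  | cons b l ih =>
    simp only [cont4]
    rcases ih with h | h
    · right; linear_combination -h
    · left; linear_combination -h

lemma hCF_formula (l : List ℤ) (hl : ∀ b ∈ l, 1 ≤ b) {s : ℝ} (hs : s ∈ Set.Ioo (0:ℝ) 1) :
    hCF l s = (((cont4 l).1 : ℝ) * s + ((cont4 l).2.1 : ℝ)) /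
      (((cont4 l).2.2.1 : ℝ) * s + ((cont4 l).2.2.2 : ℝ)) := by
  induction l with
  | nil => simp [hCF, cont4]
  | cons b l ih =>
    have hb : (1:ℝ) ≤ (b:ℝ) := by exact_mod_cast hl b (by simp)
    obtain ⟨h1, h2, h3, h4⟩ := cont4_nonneg l (fun c hc => hl c (by simp [hc]))
    have h1' : (0:ℝ) ≤ ((cont4 l).1 : ℝ) := by exact_mod_cast h1
    have h2' : (0:ℝ) ≤ ((cont4 l).2.1 : ℝ) := by exact_mod_cast h2
    have h3' : (0:ℝ) ≤ ((cont4 l).2.2.1 : ℝ) := by exact_mod_cast h3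
    have h4' : (1:ℝ) ≤ ((cont4 l).2.2.2 : ℝ) := by exact_mod_cast h4
    have hden : (0:ℝ) < ((cont4 l).2.2.1 : ℝ) * s + ((cont4 l).2.2.2 : ℝ) := by
      nlinarith [hs.1]
    have hbig : (0:ℝ) < ((b:ℝ) * ((cont4 l).2.2.1 : ℝ) + ((cont4 l).1 : ℝ)) * s +
        ((b:ℝ) * ((cont4 l).2.2.2 : ℝ) + ((cont4 l).2.1 : ℝ)) := by
      nlinarith [hs.1]
    have hsum : (b:ℝ) + (((cont4 l).1 : ℝ) * s + ((cont4 l).2.1 : ℝ)) /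
        (((cont4 l).2.2.1 : ℝ) * s + ((cont4 l).2.2.2 : ℝ)) =
        ((((b:ℝ) * ((cont4 l).2.2.1 : ℝ) + ((cont4 l).1 : ℝ)) * s +
          ((b:ℝ) * ((cont4 l).2.2.2 : ℝ) + ((cont4 l).2.1 : ℝ))) /
          (((cont4 l).2.2.1 : ℝ) * s + ((cont4 l).2.2.2 : ℝ))) := by
      rw [eq_div_iff (ne_of_gt hden), add_mul, div_mul_cancel₀ _ (ne_of_gt hden)]
      ring
    simp only [hCF]
    rw [ih (fun c hc => hl c (by simp [hc])), hsum, one_div_div]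
    simp only [cont4]
    push_cast
    ring_nf

lemma euclid_int (l : List ℤ) (a b : ℤ) :
    ∃ a' b' : ℤ, euclidEnd l (a:ℝ) (b:ℝ) = ((a':ℝ), (b':ℝ)) := by
  induction l generalizing a b with
  | nil => exact ⟨a, b, rfl⟩
  | cons c l ih =>
    obtain ⟨a', b', h⟩ := ih b (a - c*b)
    refine ⟨a', b', ?_⟩
    simp only [euclidEnd]
    rw [← h]; norm_num

lemma euclid_cont (l : List ℤ) (e₀ e₁ : ℝ) :
    ((cont4 l).2.2.1 : ℝ) * (euclidEnd l e₀ e₁).2 + ((cont4 l).2.2.2 : ℝ) * (euclidEnd l e₀ e₁).1 = e₀ ∧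
    ((cont4 l).1 : ℝ) * (euclidEnd l e₀ e₁).2 + ((cont4 l).2.1 : ℝ) * (euclidEnd l e₀ e₁).1 = e₁ := by
  induction l generalizing e₀ e₁ with
  | nil => simp [cont4, euclidEnd]
  | cons b l ih =>
    obtain ⟨h1, h2⟩ := ih e₁ (e₀ - (b:ℝ)*e₁)
    simp only [cont4, euclidEnd]
    push_cast
    exact ⟨by linear_combination (b:ℝ)*h1 + h2, h1⟩

lemma euclid_orbit : ∀ (m : ℕ) (z c : ℝ), (∀ j, j < m → gaussMap^[j] z ≠ 0) →
    euclidEnd ((List.range m).map (rcfA z)) c (c * z) =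
      (c * ∏ j ∈ Finset.range m, gaussMap^[j] z,
       (c * ∏ j ∈ Finset.range m, gaussMap^[j] z) * gaussMap^[m] z) := by
  intro m
  induction m with
  | zero => intro z c _; simp [euclidEnd]
  | succ m ih =>
    intro z c hz
    have hz0 : z ≠ 0 := by simpa using hz 0 (by omega)
    have hlist : (List.range (m+1)).map (rcfA z) =
        rcfA z 0 :: (List.range m).map (rcfA (gaussMap z)) := by
      rw [List.range_succ_eq_map]
      simp only [List.map_cons, List.map_map]
      congr 1
    have hstep : c - (rcfA z 0 : ℝ) * (c * z) = (c * z) * gaussMap z := by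
      unfold rcfA gaussMap Int.fract
      simp only [Function.iterate_zero_apply]
      field_simp
    rw [hlist]
    simp only [euclidEnd]
    rw [hstep, ih (gaussMap z) (c*z) (fun j hj => by
      rw [← Function.iterate_succ_apply]; exact hz (j+1) (by omega))]
    have hprod : ∏ j ∈ Finset.range (m+1), gaussMap^[j] z =
        z * ∏ j ∈ Finset.range m, gaussMap^[j] (gaussMap z) := by
      rw [Finset.prod_range_succ']
      simp only [Function.iterate_zero_apply, Function.iterate_succ_apply]
      ring
    rw [hprod, ← Function.iterate_succ_apply]
    simp only [Nat.succ_eq_add_one, Prod.mk.injEq]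
    constructor <;> ring

end MyAux

set_option maxHeartbeats 1000000 in
theorem rcf_prefix_of_good_approx (x : ℝ) (hx : x ∈ Set.Ioo (0:ℝ) 1) (hirr : Irrational x)
    (p q : ℕ) (hq : 0 < q) (happ : |x - (p:ℝ)/q| < 1/(q:ℝ)^2)
    (hpq : (p:ℝ)/q ∈ Set.Ioo (0:ℝ) 1) (N : ℕ) (hN : 1 ≤ N)
    (hterm : gaussMap^[N] ((p:ℝ)/q) = 0)
    (hmin : ∀ m, m < N → gaussMap^[m] ((p:ℝ)/q) ≠ 0)
    (hlast : 2 ≤ rcfA ((p:ℝ)/q) (N-1)) :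
    ∀ k, k + 1 < N → rcfA x k = rcfA ((p:ℝ)/q) k := by
  set y : ℝ := (p:ℝ)/q with hy
  set M : ℕ := N - 1 with hM
  have hMN : M + 1 = N := by omega
  have hqR : (0:ℝ) < q := by exact_mod_cast hq
  have hqy : (q:ℝ) * y = p := by rw [hy]; field_simp
  have horb : ∀ j, j < N → gaussMap^[j] y ∈ Set.Ioo (0:ℝ) 1 := by
    intro j
    induction j with
    | zero => intro _; simpa using hpq
    | succ i ih =>
      intro hj
      have hne := hmin (i+1) hj
      rw [Function.iterate_succ_apply'] at hne ⊢
      exact ⟨lt_of_le_of_ne (Int.fract_nonneg _) (Ne.symm hne), Int.fract_lt_one _⟩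
  set l : List ℤ := (List.range M).map (rcfA y) with hldef
  have hlen : l.length = M := by simp [hldef]
  have hl1 : ∀ b ∈ l, 1 ≤ b := by
    intro b hb
    rw [hldef, List.mem_map] at hb
    obtain ⟨j, hj, rfl⟩ := hb
    rw [List.mem_range] at hj
    have h := horb j (by omega)
    unfold rcfA
    rw [Int.le_floor]
    push_cast
    rw [le_div_iff₀ h.1]
    linarith only [h.2]
  have hzj : ∀ j, j < M → gaussMap^[j] y ≠ 0 := fun j hj => hmin j (by omega)
  have heu := euclid_orbit M y (q:ℝ) hzj
  set P : ℝ := ∏ j ∈ Finset.range M, gaussMap^[j] y with hPdef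
  set E : ℝ := (q:ℝ) * P with hEdef
  set F : ℝ := E * gaussMap^[M] y with hFdef
  rw [← hldef] at heu
  have hyM := horb M (by omega)
  have hPpos : 0 < P := by
    rw [hPdef]
    exact Finset.prod_pos (fun j hj => (horb j (by
      have := Finset.mem_range.mp hj; omega)).1)
  have hEpos : 0 < E := mul_pos hqR hPpos
  have hFpos : 0 < F := by rw [hFdef]; exact mul_pos hEpos hyM.1
  rw [hqy] at heu
  obtain ⟨a, b, hab⟩ := euclid_int l (q:ℤ) (p:ℤ)
  push_cast at hab
  have hEF : (E, F) = ((a:ℝ), (b:ℝ)) := by rw [← heu, ← hab]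
  have hEa : E = (a:ℝ) := congrArg Prod.fst hEF
  have hFb : F = (b:ℝ) := congrArg Prod.snd hEF
  have hF1 : (1:ℝ) ≤ F := by
    rw [hFb]
    have hb0 : (0:ℤ) < b := by exact_mod_cast (hFb ▸ hFpos)
    exact_mod_cast hb0
  have hE2F : 2 * F ≤ E := by
    have h2 : ((2:ℤ):ℝ) ≤ 1 / gaussMap^[M] y := Int.le_floor.mp hlast
    push_cast at h2
    rw [le_div_iff₀ hyM.1] at h2
    have h3 : E * (2 * gaussMap^[M] y) ≤ E * 1 :=
      mul_le_mul_of_nonneg_left (by linarith only [h2]) hEpos.le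
    rw [hFdef]
    linarith only [h3]
  obtain ⟨hid1, hid2⟩ := euclid_cont l (q:ℝ) (p:ℝ)
  rw [hab] at hid1 hid2
  simp only [Prod.fst, Prod.snd] at hid1 hid2
  rw [← hEa, ← hFb] at hid1 hid2
  obtain ⟨n1, n2, n3, n4⟩ := cont4_nonneg l hl1
  set iP2 : ℤ := (cont4 l).1 with hiP2
  set iP1 : ℤ := (cont4 l).2.1 with hiP1
  set iQ2 : ℤ := (cont4 l).2.2.1 with hiQ2
  set iQ1 : ℤ := (cont4 l).2.2.2 with hiQ1
  have hP2r : (0:ℝ) ≤ (iP2:ℝ) := by exact_mod_cast n1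
  have hP1r : (0:ℝ) ≤ (iP1:ℝ) := by exact_mod_cast n2
  have hQ2r : (0:ℝ) ≤ (iQ2:ℝ) := by exact_mod_cast n3
  have hQ1r : (1:ℝ) ≤ (iQ1:ℝ) := by exact_mod_cast n4
  have hQ1pos : (0:ℝ) < (iQ1:ℝ) := by linarith only [hQ1r]
  have key1 : (p:ℝ)*(iQ1:ℝ) - (iP1:ℝ)*q = ((iP2:ℝ)*(iQ1:ℝ) - (iP1:ℝ)*(iQ2:ℝ))*F := by
    linear_combination (iP1:ℝ)*hid1 - (iQ1:ℝ)*hid2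
  have key2 : ((iP2:ℝ)+(iP1:ℝ))*q - (p:ℝ)*((iQ2:ℝ)+(iQ1:ℝ))
      = ((iP2:ℝ)*(iQ1:ℝ) - (iP1:ℝ)*(iQ2:ℝ))*(E-F) := by
    linear_combination ((iQ2:ℝ)+(iQ1:ℝ))*hid2 - ((iP2:ℝ)+(iP1:ℝ))*hid1
  have hQ1q : 2*(iQ1:ℝ) ≤ q := by
    have t1 : (0:ℝ) ≤ (iQ2:ℝ)*F := mul_nonneg hQ2r hFpos.le
    have t2 : (0:ℝ) ≤ (iQ1:ℝ)*(E-2) :=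
      mul_nonneg (by linarith only [hQ1r]) (by linarith only [hE2F, hF1])
    linarith only [hid1, t1, t2]
  have hEFq : ((iQ2:ℝ)+(iQ1:ℝ)) ≤ (E-F)*q := by
    have t1 : (0:ℝ) ≤ (E - 2*F)*q := mul_nonneg (by linarith only [hE2F]) hqR.le
    have t2 : (0:ℝ) ≤ (F - 1)*q := mul_nonneg (by linarith only [hF1]) hqR.le
    have t3 : (0:ℝ) ≤ (iQ2:ℝ)*(F-1) := mul_nonneg hQ2r (by linarith only [hF1])
    have t4 : (0:ℝ) ≤ (iQ1:ℝ)*(E-1) :=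
      mul_nonneg (by linarith only [hQ1r]) (by linarith only [hE2F, hF1])
    linarith only [hid1, t1, t2, t3, t4]
  have habs := abs_lt.mp happ
  have hq2 : (1/(q:ℝ)^2) * (q:ℝ)^2 = 1 := by field_simp
  have hqsq : (0:ℝ) < (q:ℝ)^2 := by positivity
  have hneg1 : (-(1/(q:ℝ)^2))*(q:ℝ)^2 = -1 := by field_simp
  have hxy1' : -1 < (x-y)*(q:ℝ)^2 := by
    have h := mul_lt_mul_of_pos_right habs.1 hqsq
    rw [hneg1] at h; exact h
  have hxy2' : (x-y)*(q:ℝ)^2 < 1 := by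
    have h := mul_lt_mul_of_pos_right habs.2 hqsq
    rw [hq2] at h; exact h
  have e1' : ((iQ1:ℝ)*x - (iP1:ℝ))*q*q
      = (iQ1:ℝ)*(x-y)*q*q + ((iP2:ℝ)*(iQ1:ℝ) - (iP1:ℝ)*(iQ2:ℝ))*F*q := by
    linear_combination (q:ℝ)*key1 + (iQ1:ℝ)*(q:ℝ)*hqy
  have e2' : (((iQ2:ℝ)+(iQ1:ℝ))*x - ((iP2:ℝ)+(iP1:ℝ)))*q*q
      = ((iQ2:ℝ)+(iQ1:ℝ))*(x-y)*q*q - ((iP2:ℝ)*(iQ1:ℝ) - (iP1:ℝ)*(iQ2:ℝ))*(E-F)*q := by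
    linear_combination -(q:ℝ)*key2 + ((iQ2:ℝ)+(iQ1:ℝ))*(q:ℝ)*hqy
  have hdet := cont4_det l
  rw [← hiP2, ← hiP1, ← hiQ2, ← hiQ1] at hdet
  have main : ∃ s : ℝ, s ∈ Set.Ioo (0:ℝ) 1 ∧ x = hCF l s := by
    rcases hdet with hD | hD
    · have hDr : (iP2:ℝ)*(iQ1:ℝ) - (iP1:ℝ)*(iQ2:ℝ) = 1 := by exact_mod_cast hD
      rw [hDr] at e1' e2'
      have hX1qq : 0 < ((iQ1:ℝ)*x - (iP1:ℝ))*q*q := by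
        rw [e1']
        have t1 : 0 < (iQ1:ℝ)*((x-y)*(q:ℝ)^2 + 1) :=
          mul_pos hQ1pos (by linarith only [hxy1'])
        have t2 : (1:ℝ)*q ≤ F*q := mul_le_mul_of_nonneg_right hF1 hqR.le
        linarith only [t1, t2, hQ1q, hqR]
      have sX1 : 0 < (iQ1:ℝ)*x - (iP1:ℝ) := by
        have hrw : (iQ1:ℝ)*x - (iP1:ℝ) = (((iQ1:ℝ)*x - (iP1:ℝ))*q*q)/(q*q) := by
          field_simp
        rw [hrw]; exact div_pos hX1qq (mul_pos hqR hqR)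
      have hX2qq : (((iQ2:ℝ)+(iQ1:ℝ))*x - ((iP2:ℝ)+(iP1:ℝ)))*q*q < 0 := by
        rw [e2']
        have t1 := mul_lt_mul_of_pos_left hxy2'
          (by linarith only [hQ2r, hQ1pos] : (0:ℝ) < (iQ2:ℝ)+(iQ1:ℝ))
        linarith only [t1, hEFq]
      have sX2 : ((iQ2:ℝ)+(iQ1:ℝ))*x - ((iP2:ℝ)+(iP1:ℝ)) < 0 := by
        have hrw : ((iQ2:ℝ)+(iQ1:ℝ))*x - ((iP2:ℝ)+(iP1:ℝ))
            = ((((iQ2:ℝ)+(iQ1:ℝ))*x - ((iP2:ℝ)+(iP1:ℝ)))*q*q)/(q*q) := by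
          field_simp
        rw [hrw]; exact div_neg_of_neg_of_pos hX2qq (mul_pos hqR hqR)
      have hu : (iQ2:ℝ)*x - (iP2:ℝ) < 0 := by linarith only [sX1, sX2]
      set s : ℝ := ((iP1:ℝ) - (iQ1:ℝ)*x)/((iQ2:ℝ)*x - (iP2:ℝ)) with hsdef
      have hsmem : s ∈ Set.Ioo (0:ℝ) 1 := by
        constructor
        · exact div_pos_of_neg_of_neg (by linarith only [sX1]) hu
        · rw [hsdef, div_lt_one_of_neg hu]
          linarith only [sX2]
      refine ⟨s, hsmem, ?_⟩
      have hform := hCF_formula l hl1 hsmem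
      rw [← hiP2, ← hiP1, ← hiQ2, ← hiQ1] at hform
      have hden : (0:ℝ) < (iQ2:ℝ)*s + (iQ1:ℝ) := by
        have := mul_nonneg hQ2r hsmem.1.le
        linarith only [this, hQ1r]
      rw [hform, eq_div_iff (ne_of_gt hden)]
      have hsu : s * ((iQ2:ℝ)*x - (iP2:ℝ)) = (iP1:ℝ) - (iQ1:ℝ)*x := by
        rw [hsdef]; exact div_mul_cancel₀ _ (ne_of_lt hu)
      linear_combination hsu
    · have hDr : (iP2:ℝ)*(iQ1:ℝ) - (iP1:ℝ)*(iQ2:ℝ) = -1 := by exact_mod_cast hD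
      rw [hDr] at e1' e2'
      have hX1qq : ((iQ1:ℝ)*x - (iP1:ℝ))*q*q < 0 := by
        rw [e1']
        have t1 := mul_lt_mul_of_pos_left hxy2' hQ1pos
        have t2 : (1:ℝ)*q ≤ F*q := mul_le_mul_of_nonneg_right hF1 hqR.le
        linarith only [t1, t2, hQ1q, hqR]
      have sX1 : (iQ1:ℝ)*x - (iP1:ℝ) < 0 := by
        have hrw : (iQ1:ℝ)*x - (iP1:ℝ) = (((iQ1:ℝ)*x - (iP1:ℝ))*q*q)/(q*q) := by
          field_simp
        rw [hrw]; exact div_neg_of_neg_of_pos hX1qq (mul_pos hqR hqR)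
      have hX2qq : 0 < (((iQ2:ℝ)+(iQ1:ℝ))*x - ((iP2:ℝ)+(iP1:ℝ)))*q*q := by
        rw [e2']
        have t1 : (0:ℝ) < ((iQ2:ℝ)+(iQ1:ℝ))*((x-y)*(q:ℝ)^2 + 1) :=
          mul_pos (by linarith only [hQ2r, hQ1pos]) (by linarith only [hxy1'])
        linarith only [t1, hEFq]
      have sX2 : 0 < ((iQ2:ℝ)+(iQ1:ℝ))*x - ((iP2:ℝ)+(iP1:ℝ)) := by
        have hrw : ((iQ2:ℝ)+(iQ1:ℝ))*x - ((iP2:ℝ)+(iP1:ℝ))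
            = ((((iQ2:ℝ)+(iQ1:ℝ))*x - ((iP2:ℝ)+(iP1:ℝ)))*q*q)/(q*q) := by
          field_simp
        rw [hrw]; exact div_pos hX2qq (mul_pos hqR hqR)
      have hu : 0 < (iQ2:ℝ)*x - (iP2:ℝ) := by linarith only [sX1, sX2]
      set s : ℝ := ((iP1:ℝ) - (iQ1:ℝ)*x)/((iQ2:ℝ)*x - (iP2:ℝ)) with hsdef
      have hsmem : s ∈ Set.Ioo (0:ℝ) 1 := by
        constructor
        · exact div_pos (by linarith only [sX1]) hu
        · rw [hsdef, div_lt_one hu]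
          linarith only [sX2]
      refine ⟨s, hsmem, ?_⟩
      have hform := hCF_formula l hl1 hsmem
      rw [← hiP2, ← hiP1, ← hiQ2, ← hiQ1] at hform
      have hden : (0:ℝ) < (iQ2:ℝ)*s + (iQ1:ℝ) := by
        have := mul_nonneg hQ2r hsmem.1.le
        linarith only [this, hQ1r]
      rw [hform, eq_div_iff (ne_of_gt hden)]
      have hsu : s * ((iQ2:ℝ)*x - (iP2:ℝ)) = (iP1:ℝ) - (iQ1:ℝ)*x := by
        rw [hsdef]; exact div_mul_cancel₀ _ (ne_of_gt hu)
      linear_combination hsu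
  obtain ⟨s, hsmem, hxs⟩ := main
  intro k hk
  have hkl : k < l.length := by rw [hlen]; omega
  rw [hxs, rcfA_hCF l hl1 hsmem k hkl]
  simp only [hldef, List.getElem_map, List.getElem_range]
end

section
/- Let a ∈ Iⁿ be a full sequence and let b ∈ ℤ[i] with |b| ≥ 2√2 and Im b ≥ 1. Then for every k ≥ 0 the cylinder C(a v_k b) is full and its closure is contained in the interior of C(a), where a v_k b denotes the concatenation of a, v_k and (b). -/
open Complex MeasureTheory Filter Set
open scoped ENNReal

-- ===== auxiliary development =====
noncomputable section

namespace HCFAux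

open Complex

/-- A good partial quotient: Gaussian integer with `|a|² ≥ 2`. -/
def GoodDigit (a : ℂ) : Prop := IsGaussInt a ∧ 2 ≤ normSq a

lemma mem_fund_iff (z : ℂ) :
    z ∈ fund ↔ (-(1:ℝ)/2 ≤ z.re ∧ z.re < 1/2) ∧ (-(1:ℝ)/2 ≤ z.im ∧ z.im < 1/2) := by
  simp [fund, Set.mem_Ico]

lemma nearestGauss_re (z : ℂ) : (nearestGauss z).re = (⌊z.re + 1/2⌋ : ℤ) := by
  simp [nearestGauss]

lemma nearestGauss_im (z : ℂ) : (nearestGauss z).im = (⌊z.im + 1/2⌋ : ℤ) := by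
  simp [nearestGauss]

lemma nearestGauss_eq_zero {z : ℂ} (hz : z ∈ fund) : nearestGauss z = 0 := by
  rw [mem_fund_iff] at hz
  have h1 : ⌊z.re + 2⁻¹⌋ = 0 := by
    rw [Int.floor_eq_zero_iff]; constructor <;> [linarith [hz.1.1]; linarith [hz.1.2]]
  have h2 : ⌊z.im + 2⁻¹⌋ = 0 := by
    rw [Int.floor_eq_zero_iff]; constructor <;> [linarith [hz.2.1]; linarith [hz.2.2]]
  simp [nearestGauss, h1, h2]

lemma nearestGauss_zero : nearestGauss 0 = 0 := by
  apply nearestGauss_eq_zero; rw [mem_fund_iff]; norm_num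

lemma floor_shift (m : ℤ) (x : ℝ) : ⌊(m:ℝ) + x + 1/2⌋ = m + ⌊x + 1/2⌋ := by
  rw [show (m:ℝ) + x + 1/2 = (x + 1/2) + m by ring, Int.floor_add_intCast, add_comm]

lemma nearestGauss_add_gauss {g : ℂ} (hg : IsGaussInt g) (z : ℂ) :
    nearestGauss (g + z) = g + nearestGauss z := by
  obtain ⟨m, n, rfl⟩ := hg
  apply Complex.ext
  · rw [Complex.add_re, nearestGauss_re, nearestGauss_re]
    have h1 : ((m:ℂ) + (n:ℂ) * I + z).re = (m:ℝ) + z.re := by simp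
    have h2 : ((m:ℂ) + (n:ℂ) * I).re = (m:ℝ) := by simp
    rw [h1, h2, floor_shift]
    push_cast; ring
  · rw [Complex.add_im, nearestGauss_im, nearestGauss_im]
    have h1 : ((m:ℂ) + (n:ℂ) * I + z).im = (n:ℝ) + z.im := by simp
    have h2 : ((m:ℂ) + (n:ℂ) * I).im = (n:ℝ) := by simp
    rw [h1, h2, floor_shift]
    push_cast; ring

lemma hT_mem_fund (z : ℂ) : hT z ∈ fund := by
  rw [mem_fund_iff]
  have hre : (hT z).re = (1/z).re - (⌊(1/z).re + 1/2⌋ : ℤ) := by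
    simp [hT, nearestGauss_re, Complex.sub_re]
  have him : (hT z).im = (1/z).im - (⌊(1/z).im + 1/2⌋ : ℤ) := by
    simp [hT, nearestGauss_im, Complex.sub_im]
  refine ⟨⟨?_, ?_⟩, ?_, ?_⟩
  · rw [hre]; linarith [Int.floor_le ((1/z).re + 1/2)]
  · rw [hre]; linarith [Int.lt_floor_add_one ((1/z).re + 1/2)]
  · rw [him]; linarith [Int.floor_le ((1/z).im + 1/2)]
  · rw [him]; linarith [Int.lt_floor_add_one ((1/z).im + 1/2)]

lemma fund_normSq_le {z : ℂ} (hz : z ∈ fund) : normSq z ≤ 1/2 := by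
  rw [mem_fund_iff] at hz
  rw [Complex.normSq_apply]
  nlinarith [hz.1.1, hz.1.2, hz.2.1, hz.2.2]

lemma denom_ne_zero {a t : ℂ} (hd : GoodDigit a) (ht : normSq t ≤ 1/2) : a + t ≠ 0 := by
  intro h
  have : a = -t := by linear_combination h
  have h2 := hd.2
  rw [this, normSq_neg] at h2
  linarith

end HCFAux
end
noncomputable section
namespace HCFAux
open Complex

/-- Reverse composition of the maps `w ↦ 1/(a + w)`. -/
noncomputable def hcomp : List ℂ → ℂ → ℂ
  | [], w => w
  | a :: u, w => (a + hcomp u w)⁻¹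

@[simp] lemma hcomp_nil (w : ℂ) : hcomp [] w = w := rfl
@[simp] lemma hcomp_cons (a : ℂ) (u : List ℂ) (w : ℂ) :
    hcomp (a :: u) w = (a + hcomp u w)⁻¹ := rfl

lemma hcomp_append (x y : List ℂ) (w : ℂ) : hcomp (x ++ y) w = hcomp x (hcomp y w) := by
  induction x with
  | nil => rfl
  | cons a u ih => simp [ih]

/-- All partial compositions lie in `𝔇`. -/
def chain : List ℂ → ℂ → Prop
  | [], w => w ∈ fund
  | a :: u, w => hcomp (a :: u) w ∈ fund ∧ chain u w

@[simp] lemma chain_nil (w : ℂ) : chain [] w ↔ w ∈ fund := Iff.rfl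
@[simp] lemma chain_cons (a : ℂ) (u : List ℂ) (w : ℂ) :
    chain (a :: u) w ↔ hcomp (a :: u) w ∈ fund ∧ chain u w := Iff.rfl

lemma chain_base {u : List ℂ} {w : ℂ} (h : chain u w) : w ∈ fund := by
  induction u with
  | nil => exact h
  | cons a u ih => exact ih h.2

lemma chain_head {u : List ℂ} {w : ℂ} (h : chain u w) : hcomp u w ∈ fund := by
  cases u with
  | nil => exact h
  | cons a u => exact h.1

lemma chain_append (x y : List ℂ) (w : ℂ) :
    chain (x ++ y) w ↔ chain x (hcomp y w) ∧ chain y w := by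
  induction x with
  | nil =>
    simp only [List.nil_append, chain_nil]
    exact ⟨fun h => ⟨chain_head h, h⟩, fun h => h.2⟩
  | cons a u ih =>
    simp only [List.cons_append, chain_cons, ih, hcomp_cons, hcomp_append]
    tauto

/-- `chain` without the base membership `w ∈ fund`. -/
def chain' : List ℂ → ℂ → Prop
  | [], _ => True
  | a :: u, w => hcomp (a :: u) w ∈ fund ∧ chain' u w

@[simp] lemma chain'_nil (w : ℂ) : chain' [] w ↔ True := Iff.rfl
@[simp] lemma chain'_cons (a : ℂ) (u : List ℂ) (w : ℂ) :
    chain' (a :: u) w ↔ hcomp (a :: u) w ∈ fund ∧ chain' u w := Iff.rfl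

lemma chain_iff_chain' (u : List ℂ) (w : ℂ) : chain u w ↔ chain' u w ∧ w ∈ fund := by
  induction u with
  | nil => simp
  | cons a u ih => simp [chain, chain', ih]; tauto

lemma chain'_append (x y : List ℂ) (w : ℂ) :
    chain' (x ++ y) w ↔ chain' x (hcomp y w) ∧ chain' y w := by
  induction x with
  | nil => simp
  | cons a u ih =>
    simp only [List.cons_append, chain'_cons, ih, hcomp_cons, hcomp_append]
    tauto

lemma mem_cylinder_cons (a : ℂ) (u : List ℂ) (z : ℂ) :
    z ∈ cylinder (a :: u) ↔ z ∈ fund ∧ nearestGauss (1/z) = a ∧ hT z ∈ cylinder u := by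
  constructor
  · rintro ⟨hf, hq⟩
    refine ⟨hf, ?_, hT_mem_fund z, fun j => ?_⟩
    · have := hq ⟨0, by simp⟩
      simpa [hA] using this
    · have := hq j.succ
      simpa [hA, Function.iterate_succ_apply] using this
  · rintro ⟨hf, ha, hc⟩
    refine ⟨hf, fun j => ?_⟩
    induction j using Fin.cases with
    | zero => simpa [hA] using ha
    | succ i =>
      have := hc.2 i
      simpa [hA, Function.iterate_succ_apply] using this

lemma chain_iterate {u : List ℂ} (hu : ∀ x ∈ u, GoodDigit x) {w : ℂ} (h : chain u w) :
    hcomp u w ∈ cylinder u ∧ hT^[u.length] (hcomp u w) = w := by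
  induction u with
  | nil =>
    exact ⟨⟨h, fun j => absurd j.2 (by simp)⟩, rfl⟩
  | cons a u ih =>
    obtain ⟨h1, h2⟩ := h
    obtain ⟨ih1, ih2⟩ := ih (fun x hx => hu x (List.mem_cons_of_mem a hx)) h2
    have hda : GoodDigit a := hu a List.mem_cons_self
    have htf : hcomp u w ∈ fund := chain_head h2
    have hden : a + hcomp u w ≠ 0 := denom_ne_zero hda (fund_normSq_le htf)
    have hz : hcomp (a :: u) w = (a + hcomp u w)⁻¹ := rfl
    have hzinv : 1 / hcomp (a :: u) w = a + hcomp u w := by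
      rw [hz, one_div, inv_inv]
    have hngauss : nearestGauss (1 / hcomp (a :: u) w) = a := by
      rw [hzinv, nearestGauss_add_gauss hda.1, nearestGauss_eq_zero htf, add_zero]
    have hTz : hT (hcomp (a :: u) w) = hcomp u w := by
      rw [hT, hzinv, nearestGauss_add_gauss hda.1, nearestGauss_eq_zero htf]; ring
    constructor
    · rw [mem_cylinder_cons]
      exact ⟨h1, hngauss, by rw [hTz]; exact ih1⟩
    · have : (a :: u).length = u.length + 1 := rfl
      rw [this, Function.iterate_succ_apply, hTz, ih2]

lemma cylinder_spec {u : List ℂ} (hu : ∀ x ∈ u, GoodDigit x) {z : ℂ} (hz : z ∈ cylinder u) :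
    chain u (hT^[u.length] z) ∧ z = hcomp u (hT^[u.length] z) := by
  induction u generalizing z with
  | nil => exact ⟨hz.1, rfl⟩
  | cons a u ih =>
    rw [mem_cylinder_cons] at hz
    obtain ⟨hf, ha, hc⟩ := hz
    have hda : GoodDigit a := hu a List.mem_cons_self
    obtain ⟨ih1, ih2⟩ := ih (fun x hx => hu x (List.mem_cons_of_mem a hx)) hc
    have hlen : (a :: u).length = u.length + 1 := rfl
    have hiter : hT^[(a :: u).length] z = hT^[u.length] (hT z) := by
      rw [hlen, Function.iterate_succ_apply]
    have hz0 : z ≠ 0 := by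
      intro h
      rw [h] at ha
      rw [div_zero, nearestGauss_zero] at ha
      have := hda.2
      rw [← ha] at this
      simp [normSq] at this
      linarith
    have h1z : 1 / z = a + hcomp u (hT^[u.length] (hT z)) := by
      rw [← ih2]
      rw [hT] at *
      have : nearestGauss (1/z) = a := ha
      rw [this]
      ring
    constructor
    · rw [hiter]
      refine ⟨?_, ih1⟩
      have : hcomp (a :: u) (hT^[u.length] (hT z)) = z := by
        rw [hcomp_cons, ← h1z, one_div, inv_inv]
      rw [this]; exact hf
    · rw [hiter, hcomp_cons, ← h1z, one_div, inv_inv]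

lemma proto_eq_chainSet {u : List ℂ} (hu : ∀ x ∈ u, GoodDigit x) :
    proto u = {w | chain u w} := by
  ext w
  constructor
  · rintro ⟨z, hz, rfl⟩
    exact (cylinder_spec hu hz).1
  · intro hw
    obtain ⟨h1, h2⟩ := chain_iterate hu hw
    exact ⟨hcomp u w, h1, h2⟩

lemma cylinder_eq_image {u : List ℂ} (hu : ∀ x ∈ u, GoodDigit x) :
    cylinder u = hcomp u '' {w | chain u w} := by
  ext z
  constructor
  · intro hz
    obtain ⟨h1, h2⟩ := cylinder_spec hu hz
    exact ⟨hT^[u.length] z, h1, h2.symm⟩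
  · rintro ⟨w, hw, rfl⟩
    exact (chain_iterate hu hw).1

lemma fullSeq_iff {u : List ℂ} (hu : ∀ x ∈ u, GoodDigit x) :
    FullSeq u ↔ ∀ w ∈ fund, chain u w := by
  rw [FullSeq, proto_eq_chainSet hu]
  constructor
  · intro h w hw; rw [Set.ext_iff] at h; exact (h w).2 hw
  · intro h
    apply Set.Subset.antisymm
    · intro w hw; exact chain_base hw
    · intro w hw; exact h w hw

end HCFAux
end
noncomputable section
namespace HCFAux
open Complex

lemma disk_step (a c c' : ℂ) (r2 κ r2' : ℝ) (hκ : κ = normSq (a + c) - r2)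
    (hκ0 : 0 < κ) (hc' : c' * (κ:ℂ) = (starRingEnd ℂ) (a + c)) (hr2' : r2' = r2 / κ^2)
    (x : ℂ) (hx : normSq (x - c) ≤ r2) :
    normSq ((a + x)⁻¹ - c') ≤ r2' := by
  have hr2 : 0 ≤ r2 := le_trans (normSq_nonneg _) hx
  have hζ : a + x ≠ 0 := by
    intro h
    have hxc : x - c = -(a + c) := by linear_combination h
    rw [hxc, normSq_neg] at hx
    linarith
  have hκC : (κ:ℂ) ≠ 0 := by exact_mod_cast hκ0.ne'
  have h1 : (a + x)⁻¹ - c' = ((κ:ℂ) - (starRingEnd ℂ) (a + c) * (a + x)) / ((κ:ℂ) * (a + x)) := by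
    rw [eq_div_iff (mul_ne_zero hκC hζ)]
    have : ((a + x)⁻¹ - c') * ((κ:ℂ) * (a + x)) = (κ:ℂ) - c' * (κ:ℂ) * (a+x) := by
      field_simp
    rw [this, hc']
  rw [h1, normSq_div, normSq_mul, hr2']
  have hnζ : 0 < normSq (a + x) := normSq_pos.2 hζ
  have hnκ : 0 < normSq ((κ:ℝ) : ℂ) := normSq_pos.2 hκC
  rw [div_le_div_iff₀ (by positivity) (by positivity)]
  have hns : normSq ((κ:ℝ):ℂ) = κ * κ := normSq_ofReal κ
  have key : r2 * normSq (a + x) - normSq ((κ:ℂ) - (starRingEnd ℂ) (a + c) * (a + x))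
      = κ * (r2 - normSq (x - c)) := by
    subst hκ
    simp only [normSq_apply, Complex.add_re, Complex.add_im, Complex.sub_re, Complex.sub_im,
      Complex.mul_re, Complex.mul_im, Complex.conj_re, Complex.conj_im,
      Complex.ofReal_re, Complex.ofReal_im]
    ring
  rw [hns]
  nlinarith [mul_nonneg hκ0.le (sub_nonneg.2 hx), sq_nonneg κ,
    mul_nonneg (mul_nonneg hκ0.le hκ0.le) (mul_nonneg hκ0.le (sub_nonneg.2 hx))]

lemma ne_of_disk {x c p : ℂ} {r2 : ℝ} (h : normSq (x - c) ≤ r2)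
    (hp : r2 < normSq (p - c)) : x ≠ p := by
  intro rfle; subst rfle; linarith

lemma normSq_coord {x c : ℂ} {r2 : ℝ} (h : normSq (x - c) ≤ r2) :
    (x.re - c.re)^2 ≤ r2 ∧ (x.im - c.im)^2 ≤ r2 := by
  rw [normSq_apply, Complex.sub_re, Complex.sub_im] at h
  constructor <;> nlinarith [sq_nonneg (x.re - c.re), sq_nonneg (x.im - c.im)]

/-- halfplane `Im ζ ≥ 1/2` inverts into the disk `|w + i| ≤ 1`. -/
lemma hp_entry {ζ : ℂ} (h : 1/2 ≤ ζ.im) : normSq (ζ⁻¹ + I) ≤ 1 := by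
  have hζ : ζ ≠ 0 := by
    intro h0; rw [h0] at h; simp at h; linarith
  have hn : 0 < normSq ζ := normSq_pos.2 hζ
  have hrepr : ζ⁻¹ + I = (1 + I*ζ)/ζ := by field_simp
  rw [hrepr, normSq_div, div_le_one hn]
  simp only [normSq_apply, Complex.add_re, Complex.add_im, Complex.mul_re, Complex.mul_im,
    Complex.I_re, Complex.I_im, Complex.one_re, Complex.one_im]
  nlinarith [sq_nonneg ζ.re, sq_nonneg ζ.im]

lemma hp_nonzero {w : ℂ} (h1 : normSq (w + I) ≤ 1) (h0 : w ≠ 0) : 1 < normSq (w - I) := by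
  have hn : 0 < normSq w := normSq_pos.2 h0
  simp only [normSq_apply, Complex.add_re, Complex.add_im, Complex.sub_re, Complex.sub_im,
    Complex.I_re, Complex.I_im] at *
  nlinarith

lemma hpA {x : ℂ} (h : 1 < normSq (x - I)) : ((-2*I + x)⁻¹).im < 1/2 := by
  by_cases hζ : -2*I + x = 0
  · rw [hζ]; norm_num
  have hn : 0 < normSq (-2*I + x) := normSq_pos.2 hζ
  rw [Complex.inv_im, div_lt_iff₀ hn]
  have e1 : (-2*I + x).re = x.re := by simp
  have e2 : (-2*I + x).im = x.im - 2 := by simp; ring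
  rw [normSq_apply, e1, e2]
  rw [normSq_apply] at h
  simp only [Complex.sub_re, Complex.sub_im, Complex.I_re, Complex.I_im] at h
  nlinarith

lemma hpB1 {x : ℂ} (hne : x ≠ 2) (h : x.im < 1/2) : 1 < normSq ((-2 + x)⁻¹ + I) := by
  have hζ : (-2 : ℂ) + x ≠ 0 := by
    intro h0; apply hne; linear_combination h0
  have hn : 0 < normSq (-2 + x) := normSq_pos.2 hζ
  have hrepr : (-2 + x)⁻¹ + I = (1 + I*(-2 + x))/(-2 + x) := by field_simp
  rw [hrepr, normSq_div, lt_div_iff₀ hn]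
  have e1 : ((-2 : ℂ) + x).re = x.re - 2 := by simp; ring
  have e2 : ((-2 : ℂ) + x).im = x.im := by simp
  rw [normSq_apply, normSq_apply]
  simp only [Complex.add_re, Complex.add_im, Complex.mul_re, Complex.mul_im,
    Complex.I_re, Complex.I_im, Complex.one_re, Complex.one_im, e1, e2]
  nlinarith

lemma hpC {x : ℂ} (h : 1 < normSq (x + I)) : -(1:ℝ)/2 < ((2*I + x)⁻¹).im := by
  by_cases hζ : 2*I + x = 0
  · rw [hζ]; simp; norm_num
  have hn : 0 < normSq (2*I + x) := normSq_pos.2 hζ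
  rw [Complex.inv_im, neg_div, neg_lt, ← neg_div, neg_neg, div_lt_iff₀ hn]
  have e1 : (2*I + x).re = x.re := by simp
  have e2 : (2*I + x).im = x.im + 2 := by simp; ring
  rw [normSq_apply, e1, e2]
  rw [normSq_apply] at h
  simp only [Complex.add_re, Complex.add_im, Complex.I_re, Complex.I_im] at h
  nlinarith

lemma hpB2 {x : ℂ} (hne : x ≠ 2) (h : -(1:ℝ)/2 < x.im) : 1 < normSq ((-2 + x)⁻¹ - I) := by
  have hζ : (-2 : ℂ) + x ≠ 0 := by
    intro h0; apply hne; linear_combination h0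
  have hn : 0 < normSq (-2 + x) := normSq_pos.2 hζ
  have hrepr : (-2 + x)⁻¹ - I = (1 - I*(-2 + x))/(-2 + x) := by field_simp
  rw [hrepr, normSq_div, lt_div_iff₀ hn]
  have e1 : ((-2 : ℂ) + x).re = x.re - 2 := by simp; ring
  have e2 : ((-2 : ℂ) + x).im = x.im := by simp
  rw [normSq_apply, normSq_apply]
  simp only [Complex.sub_re, Complex.sub_im, Complex.mul_re, Complex.mul_im,
    Complex.I_re, Complex.I_im, Complex.one_re, Complex.one_im, e1, e2]
  nlinarith

end HCFAux
end
noncomputable section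
namespace HCFAux
open Complex

/-- closed unit box `[-1/2,1/2]²` (closure of `fund`). -/
def box : Set ℂ := {z : ℂ | -(1:ℝ)/2 ≤ z.re ∧ z.re ≤ 1/2 ∧ -(1:ℝ)/2 ≤ z.im ∧ z.im ≤ 1/2}

/-- open unit box `(-1/2,1/2)²` (interior of `fund`). -/
def ubox : Set ℂ := {z : ℂ | -(1:ℝ)/2 < z.re ∧ z.re < 1/2 ∧ -(1:ℝ)/2 < z.im ∧ z.im < 1/2}

lemma fund_subset_box : fund ⊆ box := by
  intro z hz; rw [mem_fund_iff] at hz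
  exact ⟨hz.1.1, hz.1.2.le, hz.2.1, hz.2.2.le⟩

lemma ubox_subset_fund : ubox ⊆ fund := by
  intro z hz; rw [mem_fund_iff]
  exact ⟨⟨hz.1.le, hz.2.1⟩, hz.2.2.1.le, hz.2.2.2⟩

lemma isOpen_ubox : IsOpen ubox := by
  have : ubox = (Complex.reProdIm (Set.Ioo (-(1:ℝ)/2) (1/2)) (Set.Ioo (-(1:ℝ)/2) (1/2))) := by
    ext z; simp [Complex.mem_reProdIm, ubox, Set.mem_Ioo, Set.mem_setOf_eq]; norm_num; tauto
  rw [this]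
  exact (isOpen_Ioo.reProdIm isOpen_Ioo)

lemma isCompact_box : IsCompact box := by
  apply Metric.isCompact_of_isClosed_isBounded
  · have : box = (Complex.reProdIm (Set.Icc (-(1:ℝ)/2) (1/2)) (Set.Icc (-(1:ℝ)/2) (1/2))) := by
      ext z; simp [Complex.mem_reProdIm, box, Set.mem_Icc, Set.mem_setOf_eq]; norm_num; tauto
    rw [this]
    exact (isClosed_Icc.reProdIm isClosed_Icc)
  · apply Bornology.IsBounded.subset (Metric.isBounded_closedBall (x := (0:ℂ)) (r := 1))
    intro z hz
    simp only [Metric.mem_closedBall, dist_zero_right]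
    obtain ⟨h1, h2, h3, h4⟩ := hz
    have ha : |z.re| ≤ 1/2 := abs_le.mpr ⟨by linarith, h2⟩
    have hb : |z.im| ≤ 1/2 := abs_le.mpr ⟨by linarith, h4⟩
    calc ‖z‖ ≤ |z.re| + |z.im| := Complex.norm_le_abs_re_add_abs_im z
    _ ≤ 1 := by linarith

/-- The block-entry invariant region. -/
def Gpred (x : ℂ) : Prop := normSq x ≤ 2/9 ∧ 1 < normSq (x - I)

lemma fund_of_small {z : ℂ} (h : normSq z ≤ 2/9) : z ∈ fund := by
  rw [normSq_apply] at h
  rw [mem_fund_iff]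
  refine ⟨⟨?_, ?_⟩, ?_, ?_⟩ <;> nlinarith [sq_nonneg z.re, sq_nonneg z.im]

lemma entry {b w : ℂ} (habs : 2 * Real.sqrt 2 ≤ ‖b‖) (hbim : 1 ≤ b.im)
    (hw : w ∈ box) : Gpred ((b + w)⁻¹) ∧ (b + w)⁻¹ ∈ fund ∧ b + w ≠ 0 := by
  obtain ⟨hw1, hw2, hw3, hw4⟩ := hw
  have hs : Real.sqrt 2 ^ 2 = 2 := Real.sq_sqrt (by norm_num)
  have hs0 : 0 ≤ Real.sqrt 2 := Real.sqrt_nonneg 2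
  have hnsw : normSq w ≤ 1/2 := by rw [normSq_apply]; nlinarith
  have habsw : ‖w‖ ≤ Real.sqrt 2 / 2 := by
    rw [Complex.norm_def]
    have h1 : normSq w ≤ (Real.sqrt 2 / 2)^2 := by nlinarith
    calc Real.sqrt (normSq w) ≤ Real.sqrt ((Real.sqrt 2/2)^2) := Real.sqrt_le_sqrt h1
    _ = Real.sqrt 2 / 2 := Real.sqrt_sq (by positivity)
  have htri : ‖b‖ ≤ ‖b + w‖ + ‖w‖ := by
    have h := norm_add_le (b + w) (-w)
    simp only [norm_neg, add_neg_cancel_right] at h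
    simpa using h
  have habsbw : 3 * Real.sqrt 2 / 2 ≤ ‖b + w‖ := by linarith
  have hns : (9:ℝ)/2 ≤ normSq (b + w) := by
    rw [← Complex.sq_norm]
    nlinarith [norm_nonneg (b + w)]
  have hbw0 : b + w ≠ 0 := by
    intro h0; rw [h0] at hns; simp at hns; linarith
  have hinv : normSq ((b + w)⁻¹) ≤ 2/9 := by
    rw [normSq_inv]
    calc (normSq (b+w))⁻¹ ≤ ((9:ℝ)/2)⁻¹ := by
          apply inv_anti₀ (by norm_num) hns
    _ = 2/9 := by norm_num
  have him : 1/2 ≤ (b + w).im := by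
    rw [Complex.add_im]; linarith
  have hdisk : normSq ((b + w)⁻¹ + I) ≤ 1 := hp_entry him
  have hnz : (b + w)⁻¹ ≠ 0 := inv_ne_zero hbw0
  exact ⟨⟨hinv, hp_nonzero hdisk hnz⟩, fund_of_small hinv, hbw0⟩

end HCFAux
end
noncomputable section
namespace HCFAux
open Complex

lemma stageA {x : ℂ} (hd : normSq x ≤ 2/9) (hh : 1 < normSq (x - I)) :
    normSq ((-2*I + x)⁻¹ - ((9/17 : ℝ) : ℂ)*I) ≤ 9/578 ∧ ((-2*I + x)⁻¹).im < 1/2 ∧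
      (-2*I + x)⁻¹ ∈ fund := by
  have h1 : normSq ((-2*I + x)⁻¹ - ((9/17:ℝ):ℂ)*I) ≤ 9/578 := by
    have h := disk_step (-2*I) 0 (((9/17:ℝ):ℂ)*I) (2/9) (34/9) (9/578)
      (by simp [normSq_apply]; norm_num)
      (by norm_num)
      (by apply Complex.ext <;> simp [map_ofNat] <;> norm_num)
      (by norm_num) x (by simpa using hd)
    simpa using h
  have h2 : ((-2*I + x)⁻¹).im < 1/2 := hpA hh
  refine ⟨h1, h2, ?_⟩
  obtain ⟨hre, him⟩ := normSq_coord h1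
  simp only [Complex.sub_re, Complex.sub_im, Complex.mul_re, Complex.mul_im,
    Complex.ofReal_re, Complex.ofReal_im, Complex.I_re, Complex.I_im] at hre him
  rw [mem_fund_iff]
  refine ⟨⟨by nlinarith, by nlinarith⟩, by nlinarith, h2⟩

lemma stageB1 {x : ℂ} (hd : normSq (x - ((9/17 : ℝ) : ℂ)*I) ≤ 9/578) (hh : x.im < 1/2) :
    normSq ((-2 + x)⁻¹ - (((-68/145:ℝ):ℂ) + ((-18/145:ℝ):ℂ)*I)) ≤ 18/21025 ∧
      1 < normSq ((-2 + x)⁻¹ + I) ∧ (-2 + x)⁻¹ ∈ fund := by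
  have h1 : normSq ((-2 + x)⁻¹ - (((-68/145:ℝ):ℂ) + ((-18/145:ℝ):ℂ)*I)) ≤ 18/21025 := by
    have h := disk_step (-2) (((9/17:ℝ):ℂ)*I) (((-68/145:ℝ):ℂ) + ((-18/145:ℝ):ℂ)*I)
      (9/578) (145/34) (18/21025)
      (by simp [normSq_apply]; norm_num)
      (by norm_num)
      (by apply Complex.ext <;> simp [map_ofNat] <;> norm_num)
      (by norm_num) x hd
    simpa using h
  have hne : x ≠ 2 := ne_of_disk hd (by simp [normSq_apply]; norm_num)
  have h2 : 1 < normSq ((-2 + x)⁻¹ + I) := hpB1 hne hh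
  refine ⟨h1, h2, ?_⟩
  obtain ⟨hre, him⟩ := normSq_coord h1
  simp only [Complex.sub_re, Complex.sub_im, Complex.add_re, Complex.add_im, Complex.mul_re,
    Complex.mul_im, Complex.ofReal_re, Complex.ofReal_im, Complex.I_re, Complex.I_im] at hre him
  rw [mem_fund_iff]
  refine ⟨⟨by nlinarith, by nlinarith⟩, by nlinarith, by nlinarith⟩

lemma stageC {x : ℂ} (hd : normSq (x - (((-68/145:ℝ):ℂ) + ((-18/145:ℝ):ℂ)*I)) ≤ 18/21025)
    (hh : 1 < normSq (x + I)) :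
    normSq ((2*I + x)⁻¹ - (((-34/271:ℝ):ℂ) + ((-136/271:ℝ):ℂ)*I)) ≤ 9/146882 ∧
      -(1:ℝ)/2 < ((2*I + x)⁻¹).im ∧ (2*I + x)⁻¹ ∈ fund := by
  have h1 : normSq ((2*I + x)⁻¹ - (((-34/271:ℝ):ℂ) + ((-136/271:ℝ):ℂ)*I)) ≤ 9/146882 := by
    have h := disk_step (2*I) (((-68/145:ℝ):ℂ) + ((-18/145:ℝ):ℂ)*I)
      (((-34/271:ℝ):ℂ) + ((-136/271:ℝ):ℂ)*I) (18/21025) (542/145) (9/146882)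
      (by simp [normSq_apply]; norm_num)
      (by norm_num)
      (by apply Complex.ext <;> simp [map_ofNat] <;> norm_num)
      (by norm_num) x hd
    simpa using h
  have h2 : -(1:ℝ)/2 < ((2*I + x)⁻¹).im := hpC hh
  refine ⟨h1, h2, ?_⟩
  obtain ⟨hre, him⟩ := normSq_coord h1
  simp only [Complex.sub_re, Complex.sub_im, Complex.add_re, Complex.add_im, Complex.mul_re,
    Complex.mul_im, Complex.ofReal_re, Complex.ofReal_im, Complex.I_re, Complex.I_im] at hre him
  rw [mem_fund_iff]
  refine ⟨⟨by nlinarith, by nlinarith⟩, by linarith, by nlinarith⟩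

lemma stageB2 {x : ℂ} (hd : normSq (x - (((-34/271:ℝ):ℂ) + ((-136/271:ℝ):ℂ)*I)) ≤ 9/146882)
    (hh : -(1:ℝ)/2 < x.im) :
    normSq ((-2 + x)⁻¹ - (((-1152/2585:ℝ):ℂ) + ((272/2585:ℝ):ℂ)*I)) ≤ 18/6682225 ∧
      Gpred ((-2 + x)⁻¹) ∧ (-2 + x)⁻¹ ∈ fund := by
  have h1 : normSq ((-2 + x)⁻¹ - (((-1152/2585:ℝ):ℂ) + ((272/2585:ℝ):ℂ)*I)) ≤ 18/6682225 := by
    have h := disk_step (-2) (((-34/271:ℝ):ℂ) + ((-136/271:ℝ):ℂ)*I)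
      (((-1152/2585:ℝ):ℂ) + ((272/2585:ℝ):ℂ)*I) (9/146882) (2585/542) (18/6682225)
      (by simp [normSq_apply]; norm_num)
      (by norm_num)
      (by apply Complex.ext <;> simp [map_ofNat] <;> norm_num)
      (by norm_num) x hd
    simpa using h
  have hne : x ≠ 2 := ne_of_disk hd (by simp [normSq_apply]; norm_num)
  have h2 : 1 < normSq ((-2 + x)⁻¹ - I) := hpB2 hne hh
  obtain ⟨hre, him⟩ := normSq_coord h1
  simp only [Complex.sub_re, Complex.sub_im, Complex.add_re, Complex.add_im, Complex.mul_re,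
    Complex.mul_im, Complex.ofReal_re, Complex.ofReal_im, Complex.I_re, Complex.I_im] at hre him
  have hre1 : (-2 + x)⁻¹.re ≤ -1152/2585 + 1/600 := by nlinarith
  have hre2 : -1152/2585 - 1/600 ≤ (-2 + x)⁻¹.re := by nlinarith
  have him1 : (-2 + x)⁻¹.im ≤ 272/2585 + 1/600 := by nlinarith
  have him2 : 272/2585 - 1/600 ≤ (-2 + x)⁻¹.im := by nlinarith
  have hsmall : normSq ((-2 + x)⁻¹) ≤ 2/9 := by
    rw [normSq_apply]
    nlinarith [mul_nonneg (sub_nonneg.2 hre2) (sub_nonneg.2 hre1),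
      mul_nonneg (sub_nonneg.2 him2) (sub_nonneg.2 him1)]
  exact ⟨h1, ⟨hsmall, h2⟩, fund_of_small hsmall⟩

lemma stageF {x : ℂ} (hd : normSq (x - ((9/17 : ℝ) : ℂ)*I) ≤ 9/578) :
    normSq ((3 + x)⁻¹ - (((34/105:ℝ):ℂ) + ((-2/35:ℝ):ℂ)*I)) ≤ 2/11025 := by
  have h := disk_step 3 (((9/17:ℝ):ℂ)*I) (((34/105:ℝ):ℂ) + ((-2/35:ℝ):ℂ)*I)
    (9/578) (315/34) (2/11025)
    (by simp [normSq_apply]; norm_num)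
    (by norm_num)
    (by apply Complex.ext <;> simp [map_ofNat] <;> norm_num)
    (by norm_num) x hd
  simpa using h

lemma final_mem {y : ℂ} (hd : normSq (y - (((34/105:ℝ):ℂ) + ((-2/35:ℝ):ℂ)*I)) ≤ 2/11025) :
    y ∈ ubox := by
  obtain ⟨hre, him⟩ := normSq_coord hd
  simp only [Complex.sub_re, Complex.sub_im, Complex.add_re, Complex.add_im, Complex.mul_re,
    Complex.mul_im, Complex.ofReal_re, Complex.ofReal_im, Complex.I_re, Complex.I_im] at hre him
  exact ⟨by nlinarith, by nlinarith, by nlinarith, by nlinarith⟩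

end HCFAux
end
noncomputable section
namespace HCFAux
open Complex

def block4 : List ℂ := [(-2:ℂ), 2*Complex.I, -2, -2*Complex.I]

def blocks (k : ℕ) : List ℂ := (List.replicate k block4).flatten

lemma vSeq_eq (k : ℕ) : vSeq k = [(3:ℂ), -2*Complex.I] ++ blocks k := rfl

lemma blockStep {x : ℂ} (h : Gpred x) : chain' block4 x ∧ Gpred (hcomp block4 x) := by
  obtain ⟨hA1, hA2, hA3⟩ := stageA h.1 h.2
  obtain ⟨hB1, hB2, hB3⟩ := stageB1 hA1 hA2
  obtain ⟨hC1, hC2, hC3⟩ := stageC hB1 hB2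
  obtain ⟨hD1, hD2, hD3⟩ := stageB2 hC1 hC2
  refine ⟨?_, ?_⟩
  · simp only [block4, chain'_cons, chain'_nil, hcomp_cons, hcomp_nil]
    exact ⟨hD3, ⟨hC3, ⟨hB3, ⟨hA3, trivial⟩⟩⟩⟩
  · simp only [block4, hcomp_cons, hcomp_nil]
    exact hD2

lemma blocksLemma (k : ℕ) : ∀ x, Gpred x → chain' (blocks k) x ∧ Gpred (hcomp (blocks k) x) := by
  induction k with
  | zero => intro x h; exact ⟨trivial, h⟩
  | succ k ih =>
    intro x h
    have hb : blocks (k+1) = block4 ++ blocks k := by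
      simp [blocks, List.replicate_succ]
    obtain ⟨hc, hg⟩ := ih x h
    obtain ⟨hc2, hg2⟩ := blockStep hg
    rw [hb]
    constructor
    · rw [chain'_append]; exact ⟨hc2, hc⟩
    · rw [hcomp_append]; exact hg2

lemma master {b : ℂ} (habs : 2*Real.sqrt 2 ≤ ‖b‖) (hbim : 1 ≤ b.im) (k : ℕ) :
    ∀ w ∈ box, chain' (vSeq k ++ [b]) w ∧
      normSq (hcomp (vSeq k ++ [b]) w - (((34/105:ℝ):ℂ) + ((-2/35:ℝ):ℂ)*I)) ≤ 2/11025 := by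
  intro w hw
  obtain ⟨hG, hw1f, hbw⟩ := entry habs hbim hw
  have e0 : hcomp [b] w = (b + w)⁻¹ := by simp
  obtain ⟨hcB, hGy⟩ := blocksLemma k _ hG
  obtain ⟨hA1, hA2, hA3⟩ := stageA hGy.1 hGy.2
  have hF := stageF hA1
  have efin : hcomp (vSeq k ++ [b]) w
      = (3 + (-2*Complex.I + hcomp (blocks k) ((b+w)⁻¹))⁻¹)⁻¹ := by
    rw [hcomp_append, e0, vSeq_eq, hcomp_append]
    simp only [hcomp_cons, hcomp_nil]
  constructor
  · rw [chain'_append, e0]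
    refine ⟨?_, hw1f, trivial⟩
    rw [vSeq_eq, chain'_append]
    refine ⟨?_, hcB⟩
    simp only [chain'_cons, chain'_nil, hcomp_cons, hcomp_nil]
    refine ⟨?_, hA3, trivial⟩
    exact ubox_subset_fund (final_mem hF)
  · rw [efin]
    exact hF
end HCFAux
end
noncomputable section
namespace HCFAux
open Complex

def SafeFrom : List ℂ → Set ℂ → Prop
  | [], _ => True
  | a :: u, S => SafeFrom u S ∧ ∀ x ∈ S, a + hcomp u x ≠ 0

@[simp] lemma safeFrom_nil (S : Set ℂ) : SafeFrom [] S ↔ True := Iff.rfl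
@[simp] lemma safeFrom_cons (a : ℂ) (u : List ℂ) (S : Set ℂ) :
    SafeFrom (a :: u) S ↔ SafeFrom u S ∧ ∀ x ∈ S, a + hcomp u x ≠ 0 := Iff.rfl

lemma safeFrom_mono {u : List ℂ} {S S' : Set ℂ} (h : S' ⊆ S) (hs : SafeFrom u S) :
    SafeFrom u S' := by
  induction u with
  | nil => trivial
  | cons a u ih => exact ⟨ih hs.1, fun x hx => hs.2 x (h hx)⟩

lemma safeFrom_append {u v : List ℂ} {S : Set ℂ} (hu : SafeFrom u (hcomp v '' S))
    (hv : SafeFrom v S) : SafeFrom (u ++ v) S := by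
  induction u with
  | nil => exact hv
  | cons a u ih =>
    refine ⟨ih hu.1, fun x hx => ?_⟩
    have := hu.2 (hcomp v x) ⟨x, hx, rfl⟩
    simpa [List.append_eq, hcomp_append] using this

lemma safeFrom_continuousOn {u : List ℂ} {S : Set ℂ} (h : SafeFrom u S) :
    ContinuousOn (hcomp u) S := by
  induction u with
  | nil => exact continuousOn_id
  | cons a u ih =>
    have : hcomp (a :: u) = fun w => (a + hcomp u w)⁻¹ := rfl
    rw [this]
    exact (continuousOn_const.add (ih h.1)).inv₀ h.2

lemma safe_of_chain {u : List ℂ} (hu : ∀ x ∈ u, GoodDigit x) (hch : ∀ t ∈ fund, chain u t) :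
    SafeFrom u fund := by
  induction u with
  | nil => trivial
  | cons c u ih =>
    refine ⟨ih (fun x hx => hu x (List.mem_cons_of_mem c hx)) (fun t ht => (hch t ht).2),
      fun t ht => ?_⟩
    exact denom_ne_zero (hu c List.mem_cons_self)
      (fund_normSq_le (chain_head ((hch t ht).2)))

lemma image_hcomp_append (x y : List ℂ) (S : Set ℂ) :
    hcomp (x ++ y) '' S = hcomp x '' (hcomp y '' S) := by
  rw [Set.image_image]
  exact Set.image_congr (fun w _ => hcomp_append x y w)

lemma isOpen_inv_image {S : Set ℂ} (hS : IsOpen S) (h0 : (0:ℂ) ∉ S) :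
    IsOpen ((fun z : ℂ => z⁻¹) '' S) := by
  have himg : (fun z : ℂ => z⁻¹) '' S = {y : ℂ | y⁻¹ ∈ S} := by
    ext y
    constructor
    · rintro ⟨x, hx, rfl⟩; simpa [inv_inv] using hx
    · intro hy; exact ⟨y⁻¹, hy, by simp [inv_inv]⟩
  rw [himg]
  rw [isOpen_iff_mem_nhds]
  intro y hy
  have hy0 : y ≠ 0 := by
    intro h; rw [h] at hy; simp at hy; exact h0 hy
  have hc : ContinuousAt (fun z : ℂ => z⁻¹) y := continuousAt_inv₀ hy0
  exact hc.preimage_mem_nhds (hS.mem_nhds hy)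

lemma open_image {u : List ℂ} (hu : ∀ x ∈ u, GoodDigit x) (hch : ∀ t ∈ fund, chain u t)
    {S : Set ℂ} (hS : IsOpen S) (hSf : S ⊆ fund) : IsOpen (hcomp u '' S) := by
  induction u with
  | nil => simpa [show hcomp [] = id from rfl] using hS
  | cons c u ih =>
    have iho : IsOpen (hcomp u '' S) :=
      ih (fun x hx => hu x (List.mem_cons_of_mem c hx)) (fun t ht => (hch t ht).2)
    have h0 : ∀ z ∈ hcomp u '' S, c + z ≠ 0 := by
      rintro z ⟨w, hw, rfl⟩
      exact denom_ne_zero (hu c List.mem_cons_self)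
        (fund_normSq_le (chain_head ((hch w (hSf hw)).2)))
    have himg : hcomp (c :: u) '' S
        = (fun z : ℂ => z⁻¹) '' ((fun z : ℂ => c + z) '' (hcomp u '' S)) := by
      rw [Set.image_image, Set.image_image]
      exact Set.image_congr (fun w _ => rfl)
    rw [himg]
    apply isOpen_inv_image
    · exact (Homeomorph.addLeft c).isOpenMap _ iho
    · rintro ⟨z, hz, hzc⟩
      exact h0 z hz hzc

lemma goodDigit_of_setI {x : ℂ} (h : x ∈ setI) : GoodDigit x := by
  refine ⟨h.1, ?_⟩
  have h2 := h.2
  have hs : Real.sqrt 2 ^ 2 = 2 := Real.sq_sqrt (by norm_num)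
  have := Complex.sq_norm x
  nlinarith [Real.sqrt_nonneg 2, norm_nonneg x]

lemma goodDigit_b {b : ℂ} (hbG : IsGaussInt b) (habs : 2*Real.sqrt 2 ≤ ‖b‖) :
    GoodDigit b := by
  refine ⟨hbG, ?_⟩
  have hs : Real.sqrt 2 ^ 2 = 2 := Real.sq_sqrt (by norm_num)
  have := Complex.sq_norm b
  nlinarith [Real.sqrt_nonneg 2, norm_nonneg b]

lemma goodDigit_vSeq (k : ℕ) : ∀ x ∈ vSeq k, GoodDigit x := by
  have g3 : GoodDigit 3 := ⟨⟨3, 0, by push_cast; ring⟩, by rw [normSq_apply]; norm_num⟩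
  have gm2I : GoodDigit (-2*Complex.I) :=
    ⟨⟨0, -2, by push_cast; ring⟩, by rw [normSq_apply]; simp⟩
  have gm2 : GoodDigit (-2) := ⟨⟨-2, 0, by push_cast; ring⟩, by rw [normSq_apply]; simp⟩
  have g2I : GoodDigit (2*Complex.I) :=
    ⟨⟨0, 2, by push_cast; ring⟩, by rw [normSq_apply]; simp⟩
  intro x hx
  simp only [vSeq, List.mem_append, List.mem_cons, List.not_mem_nil, or_false,
    List.mem_flatten, List.mem_replicate] at hx
  rcases hx with (rfl | rfl) | ⟨l, ⟨_, rfl⟩, hl⟩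
  · exact g3
  · exact gm2I
  · simp only [List.mem_cons, List.not_mem_nil, or_false] at hl
    rcases hl with rfl | rfl | rfl | rfl
    · exact gm2
    · exact g2I
    · exact gm2
    · exact gm2I

end HCFAux
end
noncomputable section
namespace HCFAux
open Complex

def Gset : Set ℂ := {x | Gpred x}

lemma ne_2I_of_G {x : ℂ} (hx : x ∈ Gset) : -2*Complex.I + x ≠ 0 := by
  intro h
  have hx2 : x = 2*Complex.I := by linear_combination h
  have := hx.1
  rw [hx2, normSq_apply] at this
  simp at this
  norm_num at this

lemma safeFrom_block4_G : SafeFrom block4 Gset := by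
  have gm2 : GoodDigit (-2 : ℂ) := ⟨⟨-2, 0, by push_cast; ring⟩, by rw [normSq_apply]; simp⟩
  have g2I : GoodDigit (2*Complex.I) := ⟨⟨0, 2, by push_cast; ring⟩, by rw [normSq_apply]; simp⟩
  refine ⟨⟨⟨⟨trivial, ?_⟩, ?_⟩, ?_⟩, ?_⟩
  · exact fun x hx => ne_2I_of_G hx
  · intro x hx
    obtain ⟨hA1, hA2, hA3⟩ := stageA hx.1 hx.2
    simp only [hcomp_cons, hcomp_nil]
    exact denom_ne_zero gm2 (fund_normSq_le hA3)
  · intro x hx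
    obtain ⟨hA1, hA2, hA3⟩ := stageA hx.1 hx.2
    obtain ⟨hB1, hB2, hB3⟩ := stageB1 hA1 hA2
    simp only [hcomp_cons, hcomp_nil]
    exact denom_ne_zero g2I (fund_normSq_le hB3)
  · intro x hx
    obtain ⟨hA1, hA2, hA3⟩ := stageA hx.1 hx.2
    obtain ⟨hB1, hB2, hB3⟩ := stageB1 hA1 hA2
    obtain ⟨hC1, hC2, hC3⟩ := stageC hB1 hB2
    simp only [hcomp_cons, hcomp_nil]
    exact denom_ne_zero gm2 (fund_normSq_le hC3)

lemma blocks_image_G (k : ℕ) : hcomp (blocks k) '' Gset ⊆ Gset := by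
  rintro z ⟨x, hx, rfl⟩
  exact (blocksLemma k x hx).2

lemma safeFrom_blocks_G (k : ℕ) : SafeFrom (blocks k) Gset := by
  induction k with
  | zero => trivial
  | succ k ih =>
    have hb : blocks (k+1) = block4 ++ blocks k := by simp [blocks, List.replicate_succ]
    rw [hb]
    exact safeFrom_append (safeFrom_mono (blocks_image_G k) safeFrom_block4_G) ih

lemma safeFrom_vSeq_G (k : ℕ) : SafeFrom (vSeq k) Gset := by
  have g3 : GoodDigit (3 : ℂ) := ⟨⟨3, 0, by push_cast; ring⟩, by rw [normSq_apply]; norm_num⟩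
  rw [vSeq_eq]
  apply safeFrom_append (safeFrom_mono (blocks_image_G k) ?_) (safeFrom_blocks_G k)
  refine ⟨⟨trivial, fun x hx => ne_2I_of_G hx⟩, fun x hx => ?_⟩
  obtain ⟨hA1, hA2, hA3⟩ := stageA hx.1 hx.2
  simp only [hcomp_cons, hcomp_nil]
  exact denom_ne_zero g3 (fund_normSq_le hA3)

lemma safeFrom_v_box {b : ℂ} (habs : 2*Real.sqrt 2 ≤ ‖b‖) (hbim : 1 ≤ b.im) (k : ℕ) :
    SafeFrom (vSeq k ++ [b]) box := by
  apply safeFrom_append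
  · apply safeFrom_mono ?_ (safeFrom_vSeq_G k)
    rintro z ⟨w, hw, rfl⟩
    simp only [hcomp_cons, hcomp_nil]
    exact (entry habs hbim hw).1
  · exact ⟨trivial, fun w hw => by simpa using (entry habs hbim hw).2.2⟩

end HCFAux
end
open HCFAux

theorem full_cylinder_a_vk_b (a : List ℂ) (ha : ∀ x ∈ a, x ∈ setI) (hfull : FullSeq a)
    (b : ℂ) (hbG : IsGaussInt b) (hb2 : 2 * Real.sqrt 2 ≤ ‖b‖) (hbim : 1 ≤ b.im)
    (k : ℕ) :
    FullSeq (a ++ vSeq k ++ [b]) ∧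
    closure (cylinder (a ++ vSeq k ++ [b])) ⊆ interior (cylinder a) := by
  have hadig : ∀ x ∈ a, GoodDigit x := fun x hx => goodDigit_of_setI (ha x hx)
  have hbd : GoodDigit b := goodDigit_b hbG hb2
  have hvdig : ∀ x ∈ vSeq k ++ [b], GoodDigit x := by
    intro x hx
    rw [List.mem_append] at hx
    rcases hx with h | h
    · exact goodDigit_vSeq k x h
    · rw [List.mem_singleton] at h; subst h; exact hbd
  have hLdig : ∀ x ∈ a ++ (vSeq k ++ [b]), GoodDigit x := by
    intro x hx
    rw [List.mem_append] at hx
    rcases hx with h | h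
    · exact hadig x h
    · exact hvdig x h
  have chainA : ∀ t ∈ fund, chain a t := (fullSeq_iff hadig).1 hfull
  have hmaster := master hb2 hbim k
  have hfin : ∀ w ∈ box, hcomp (vSeq k ++ [b]) w ∈ ubox := fun w hw =>
    final_mem (hmaster w hw).2
  have hassoc : a ++ vSeq k ++ [b] = a ++ (vSeq k ++ [b]) := List.append_assoc a (vSeq k) [b]
  constructor
  · rw [hassoc, fullSeq_iff hLdig]
    intro w hw
    rw [chain_append]
    have hw' := fund_subset_box hw
    have hch' : chain (vSeq k ++ [b]) w :=
      (chain_iff_chain' (vSeq k ++ [b]) w).2 ⟨(hmaster w hw').1, hw⟩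
    exact ⟨chainA _ (ubox_subset_fund (hfin w hw')), hch'⟩
  · rw [hassoc]
    have hsafe : SafeFrom (a ++ (vSeq k ++ [b])) box := by
      apply safeFrom_append
      · apply safeFrom_mono ?_ (safe_of_chain hadig chainA)
        rintro z ⟨w, hw, rfl⟩
        exact ubox_subset_fund (hfin w hw)
      · exact safeFrom_v_box hb2 hbim k
    have hcont : ContinuousOn (hcomp (a ++ (vSeq k ++ [b]))) box := safeFrom_continuousOn hsafe
    have hK : IsCompact (hcomp (a ++ (vSeq k ++ [b])) '' box) :=
      isCompact_box.image_of_continuousOn hcont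
    have hsub : cylinder (a ++ (vSeq k ++ [b])) ⊆ hcomp (a ++ (vSeq k ++ [b])) '' box := by
      rw [cylinder_eq_image hLdig]
      exact Set.image_mono (fun w hw => fund_subset_box (chain_base hw))
    have hcl : closure (cylinder (a ++ (vSeq k ++ [b]))) ⊆ hcomp (a ++ (vSeq k ++ [b])) '' box :=
      closure_minimal hsub hK.isClosed
    have himg : hcomp (a ++ (vSeq k ++ [b])) '' box ⊆ hcomp a '' ubox := by
      rw [image_hcomp_append]
      apply Set.image_mono
      rintro z ⟨w, hw, rfl⟩
      exact hfin w hw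
    have hopen : IsOpen (hcomp a '' ubox) := open_image hadig chainA isOpen_ubox ubox_subset_fund
    have hsubcyl : hcomp a '' ubox ⊆ cylinder a := by
      rw [cylinder_eq_image hadig]
      exact Set.image_mono (fun t ht => chainA t (ubox_subset_fund ht))
    exact hcl.trans (himg.trans (interior_maximal hsubcyl hopen))
end

section
/- Let a ∈ Iⁿ be a full sequence. Set p = p(a v_k) and q = q(a v_k), where a v_k is the concatenation of a and v_k. Then for every k ≥ 1, the Gaussian rational p/q lies in the cylinder C(a ṽ_k). -/
open Complex MeasureTheory Filter Set
open scoped ENNReal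

namespace RatMemCyl
open Complex

/-! ### complex normal-form helpers -/

lemma mem_fund_iff (z : ℂ) :
    z ∈ fund ↔ -(1:ℝ)/2 ≤ z.re ∧ z.re < 1/2 ∧ -(1:ℝ)/2 ≤ z.im ∧ z.im < 1/2 := by
  simp only [fund, Set.mem_setOf_eq, Set.mem_Ico, and_assoc]

lemma mk_mem_fund {x y : ℝ} (h1 : -(1:ℝ)/2 ≤ x) (h2 : x < 1/2) (h3 : -(1:ℝ)/2 ≤ y) (h4 : y < 1/2) :
    ((x:ℂ) + (y:ℂ)*Complex.I) ∈ fund := by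
  rw [mem_fund_iff]
  simp only [Complex.add_re, Complex.add_im, Complex.mul_re, Complex.mul_im, Complex.ofReal_re,
    Complex.ofReal_im, Complex.I_re, Complex.I_im]
  refine ⟨by linarith, by linarith, by linarith, by linarith⟩

lemma nearestGauss_eq {z : ℂ} {a b : ℤ} (h : z - ((a:ℂ) + (b:ℂ)*Complex.I) ∈ fund) :
    nearestGauss z = (a:ℂ) + (b:ℂ)*Complex.I := by
  rw [mem_fund_iff] at h
  simp only [Complex.sub_re, Complex.sub_im, Complex.add_re, Complex.add_im, Complex.mul_re,
    Complex.mul_im, Complex.intCast_re, Complex.intCast_im, Complex.I_re, Complex.I_im] at h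
  have ha : ⌊z.re + 1/2⌋ = a := by
    rw [Int.floor_eq_iff]
    constructor <;> nlinarith [h.1, h.2.1]
  have hb : ⌊z.im + 1/2⌋ = b := by
    rw [Int.floor_eq_iff]
    constructor <;> nlinarith [h.2.2.1, h.2.2.2]
  rw [nearestGauss, ha, hb]

lemma sub_nearestGauss_mem_fund (z : ℂ) : z - nearestGauss z ∈ fund := by
  rw [mem_fund_iff]
  simp only [nearestGauss, Complex.sub_re, Complex.sub_im, Complex.add_re, Complex.add_im,
    Complex.mul_re, Complex.mul_im, Complex.intCast_re, Complex.intCast_im, Complex.I_re,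
    Complex.I_im]
  have h1 := Int.floor_le (z.re + 1/2)
  have h2 := Int.lt_floor_add_one (z.re + 1/2)
  have h3 := Int.floor_le (z.im + 1/2)
  have h4 := Int.lt_floor_add_one (z.im + 1/2)
  refine ⟨by nlinarith, by nlinarith, by nlinarith, by nlinarith⟩

lemma nearestGauss_eq' {z g : ℂ} (hg : IsGaussInt g) (h : z - g ∈ fund) : nearestGauss z = g := by
  obtain ⟨a, b, rfl⟩ := hg; exact nearestGauss_eq h

lemma nearestGauss_zero : nearestGauss 0 = 0 := by
  have := nearestGauss_eq (z := 0) (a := 0) (b := 0) (by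
    simp only [Int.cast_zero, zero_mul, add_zero, sub_zero]
    rw [mem_fund_iff]; norm_num)
  simpa using this

lemma mk_mul_mk (a b c d : ℝ) :
    ((a:ℂ) + (b:ℂ)*I) * ((c:ℂ) + (d:ℂ)*I) = ((a*c - b*d : ℝ):ℂ) + ((a*d + b*c : ℝ):ℂ)*I := by
  push_cast
  linear_combination ((b:ℂ) * (d:ℂ)) * Complex.I_sq

lemma mk_eq_one {a b : ℝ} : (a:ℂ) + (b:ℂ)*I = 1 ↔ a = 1 ∧ b = 0 := by
  constructor
  · intro h
    have hre := congrArg Complex.re h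
    have him := congrArg Complex.im h
    simp at hre him
    exact ⟨hre, him⟩
  · rintro ⟨rfl, rfl⟩; simp

lemma mk_ne_zero_of_re {a b : ℝ} (ha : a ≠ 0) : (a:ℂ) + (b:ℂ)*I ≠ 0 := by
  intro h
  have := congrArg Complex.re h
  simp at this
  exact ha this

lemma mk_ne_zero_of_im {a b : ℝ} (hb : b ≠ 0) : (a:ℂ) + (b:ℂ)*I ≠ 0 := by
  intro h
  have := congrArg Complex.im h
  simp at this
  exact hb this

lemma eq_one_div_mk {a b c d : ℝ} (h : ((a:ℂ)+(b:ℂ)*I) * ((c:ℂ)+(d:ℂ)*I) = 1)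
    : (a:ℂ)+(b:ℂ)*I = 1 / ((c:ℂ)+(d:ℂ)*I) :=
  eq_one_div_of_mul_eq_one_left (by linear_combination h)

/-! ### chain predicate and digit extraction -/

lemma hT_step {w x g : ℂ} (hg : IsGaussInt g) (hx : x ∈ fund) (hne : g + x ≠ 0)
    (hw : w = 1/(g + x)) : hT w = x ∧ nearestGauss (1/w) = g ∧ w ≠ 0 := by
  have hw0 : w ≠ 0 := by rw [hw]; exact one_div_ne_zero hne
  have hinv : 1/w = g + x := by rw [hw, one_div_one_div]
  have hng : nearestGauss (1/w) = g := by
    apply nearestGauss_eq' hg; rw [hinv]; simpa using hx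
  refine ⟨?_, hng, hw0⟩
  rw [hT, hng, hinv]; ring

def ChainP : List ℂ → ℂ → Prop
  | [], w => w ∈ fund
  | (b :: u), w => w ∈ fund ∧ IsGaussInt b ∧ ∃ x, ChainP u x ∧ b + x ≠ 0 ∧ w = 1/(b + x)

lemma ChainP.mem_fund {u : List ℂ} {w : ℂ} (h : ChainP u w) : w ∈ fund := by
  cases u with
  | nil => exact h
  | cons b u => exact h.1

lemma ChainP.digits {u : List ℂ} {w : ℂ} (h : ChainP u w) :
    ∀ j : Fin u.length, hA w j = u.get j := by
  induction u generalizing w with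
  | nil => intro j; exact absurd j.2 (by simp)
  | cons b u ih =>
    obtain ⟨hwf, hb, x, hchain, hne, hw⟩ := h
    obtain ⟨hTw, hng, hw0⟩ := hT_step hb hchain.mem_fund hne hw
    intro j
    rcases j with ⟨j, hj⟩
    cases j with
    | zero => simpa [hA] using hng
    | succ j =>
      have : hA w (j+1) = hA x j := by
        simp [hA, Function.iterate_succ_apply, hTw]
      simp only [List.length_cons] at hj
      simpa [this] using ih hchain ⟨j, Nat.lt_of_succ_lt_succ hj⟩

/-! ### continuant recurrences -/

lemma cfMatrix_cons (b : ℂ) (u : List ℂ) :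
    cfMatrix (b :: u) = !![0, 1; 1, b] * cfMatrix u := by
  simp only [cfMatrix, List.map_cons, List.prod_cons, ← Matrix.mul_assoc]
  congr 1
  ext i j
  fin_cases i <;> fin_cases j <;> simp [Matrix.mul_apply, Fin.sum_univ_two]

lemma contP_cons (b : ℂ) (u : List ℂ) : contP (b :: u) = contQ u := by
  simp [contP, contQ, cfMatrix_cons, Matrix.mul_apply, Fin.sum_univ_two]

lemma contQ_cons (b : ℂ) (u : List ℂ) : contQ (b :: u) = contP u + b * contQ u := by
  simp [contP, contQ, cfMatrix_cons, Matrix.mul_apply, Fin.sum_univ_two]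

lemma contP_nil : contP [] = 0 := by
  simp [contP, cfMatrix]

lemma contQ_nil : contQ [] = 1 := by
  simp [contQ, cfMatrix]

/-! ### cylinder machinery -/

lemma cylinder_cons {b : ℂ} {u : List ℂ} {z : ℂ} (hb : b ∈ setI) (hz : z ∈ cylinder (b :: u)) :
    z ≠ 0 ∧ hT z ∈ cylinder u ∧ b + hT z ≠ 0 ∧ z = 1/(b + hT z) := by
  obtain ⟨hzf, hdig⟩ := hz
  have h0 : hA z 0 = b := by simpa using hdig ⟨0, by simp⟩
  have hz0 : z ≠ 0 := by
    intro h
    rw [h] at h0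
    simp [hA, nearestGauss_zero] at h0
    rw [← h0] at hb
    have := hb.2
    rw [norm_zero] at this
    nlinarith [Real.sq_sqrt (by norm_num : (2:ℝ) ≥ 0).le, Real.sqrt_nonneg 2]
  have hng : nearestGauss (1/z) = b := by simpa [hA] using h0
  have hTz : hT z = 1/z - b := by rw [hT, hng]
  have hsum : b + hT z = 1/z := by rw [hTz]; ring
  have hne : b + hT z ≠ 0 := by rw [hsum]; exact one_div_ne_zero hz0
  refine ⟨hz0, ⟨?_, ?_⟩, hne, by rw [hsum, one_div_one_div]⟩
  · have := sub_nearestGauss_mem_fund (1/z)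
    simpa [hT] using this
  · intro j
    have := hdig ⟨j+1, by simpa using Nat.succ_lt_succ j.2⟩
    simpa [hA, Function.iterate_succ_apply] using this

lemma cont_append_eq {u : List ℂ} (hu : ∀ x ∈ u, x ∈ setI) {v : List ℂ} {z w : ℂ}
    (hz : z ∈ cylinder u) (hw : hT^[u.length] z = w)
    (hq : contQ v ≠ 0) (hpq : contP v / contQ v = w) :
    contQ (u ++ v) ≠ 0 ∧ contP (u ++ v) / contQ (u ++ v) = z := by
  induction u generalizing z with
  | nil => simp at hw ⊢; rw [hw]; exact ⟨hq, hpq⟩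
  | cons b u ih =>
    obtain ⟨hz0, hTz, hne, hzeq⟩ := cylinder_cons (hu b (by simp)) hz
    have hw' : hT^[u.length] (hT z) = w := by
      rw [← hw]; simp [Function.iterate_succ_apply]
    obtain ⟨hq', hpq'⟩ := ih (fun x hx => hu x (by simp [hx])) hTz hw'
    have hP : contP ((b :: u) ++ v) = contQ (u ++ v) := contP_cons b (u ++ v)
    have hQ : contQ ((b :: u) ++ v) = contP (u ++ v) + b * contQ (u ++ v) :=
      contQ_cons b (u ++ v)
    have hfac : contP (u ++ v) + b * contQ (u ++ v) = contQ (u ++ v) * (b + hT z) := by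
      have : contP (u ++ v) = hT z * contQ (u ++ v) := by
        field_simp at hpq'; linear_combination hpq'
      rw [this]; ring
    have hQne : contQ ((b :: u) ++ v) ≠ 0 := by
      rw [hQ, hfac]; exact mul_ne_zero hq' hne
    refine ⟨hQne, ?_⟩
    rw [hP, hQ, hfac]
    conv_rhs => rw [hzeq]
    rw [mul_comm, ← div_div, div_right_comm, div_self hq']

/-! ### the real recursion -/

noncomputable def sSeq : ℕ → ℝ := fun j => Nat.rec 0 (fun _ s => 1/(4*(s+2))) j

lemma sSeq_zero : sSeq 0 = 0 := rfl
lemma sSeq_succ (j : ℕ) : sSeq (j+1) = 1/(4*(sSeq j + 2)) := rfl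

lemma sSeq_bounds (j : ℕ) : 0 ≤ sSeq j ∧ sSeq j ≤ 1/8 := by
  induction j with
  | zero => norm_num [sSeq_zero]
  | succ j ih =>
    rw [sSeq_succ]
    constructor
    · have := ih.1; positivity
    · rw [div_le_div_iff₀ (by nlinarith [ih.1]) (by norm_num)]
      nlinarith [ih.1]

/-! ### the explicit lists -/

noncomputable def Lt : ℕ → List ℂ := fun j => Nat.rec [2*I] (fun _ l => 2*I :: (-2+I) :: l) j
noncomputable def Lv : ℕ → List ℂ := fun j =>
  Nat.rec [-2*I] (fun j l => (if Even j then (2*I : ℂ) else -2*I) :: (-2 : ℂ) :: l) j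

lemma Lt_zero : Lt 0 = [2*I] := rfl
lemma Lt_succ (j : ℕ) : Lt (j+1) = 2*I :: (-2+I) :: Lt j := rfl
lemma Lv_zero : Lv 0 = [-2*I] := rfl
lemma Lv_succ (j : ℕ) : Lv (j+1) = (if Even j then (2*I : ℂ) else -2*I) :: (-2 : ℂ) :: Lv j := rfl

lemma vtSeq_eq (k : ℕ) : vtSeq k = (3+I) :: Lt (2*k) := by
  induction k with
  | zero => rfl
  | succ k ih =>
    rw [show 2*(k+1) = (2*k) + 1 + 1 by ring, Lt_succ, Lt_succ]
    simp only [vtSeq, List.replicate_succ, List.flatten_cons] at ih ⊢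
    simp only [List.cons_append, List.nil_append] at ih ⊢
    rw [List.cons.injEq] at ih
    rw [ih.2]

lemma vSeq_eq (k : ℕ) : vSeq k = 3 :: Lv (2*k) := by
  induction k with
  | zero => rfl
  | succ k ih =>
    rw [show 2*(k+1) = (2*k) + 1 + 1 by ring, Lv_succ, Lv_succ]
    simp only [Nat.even_add_one, Nat.even_mul, if_true, if_false, even_two, true_or,
      not_true, ite_false, ite_true]
    simp only [vSeq, List.replicate_succ, List.flatten_cons] at ih ⊢
    simp only [List.cons_append, List.nil_append] at ih ⊢
    rw [List.cons.injEq] at ih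
    rw [ih.2]

/-! ### the chain along `Lt` -/

noncomputable def tval (s : ℝ) : ℂ := ((-s : ℝ):ℂ) + ((-(1/2) : ℝ):ℂ)*I

lemma gauss_2I : IsGaussInt (2*I) := ⟨0, 2, by push_cast; ring⟩
lemma gauss_head : IsGaussInt (-2+I) := ⟨-2, 1, by push_cast; ring⟩
lemma gauss_3I : IsGaussInt (3+I) := ⟨3, 1, by push_cast; ring⟩

lemma chain_Lt (j : ℕ) : ChainP (Lt j) (tval (sSeq j)) := by
  induction j with
  | zero =>
    rw [Lt_zero, sSeq_zero]
    refine ⟨?_, gauss_2I, 0, ?_, ?_, ?_⟩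
    · exact mk_mem_fund (by norm_num) (by norm_num) (by norm_num) (by norm_num)
    · show (0:ℂ) ∈ fund
      have := mk_mem_fund (x := 0) (y := 0) (by norm_num) (by norm_num) (by norm_num) (by norm_num)
      simpa using this
    · intro h
      have := congrArg Complex.im h
      simp at this
    · rw [add_zero, show (2*I : ℂ) = ((0:ℝ):ℂ) + ((2:ℝ):ℂ)*I by push_cast; ring]
      apply eq_one_div_mk
      rw [mk_mul_mk, mk_eq_one]
      norm_num
  | succ j ih =>
    obtain ⟨hs0, hs8⟩ := sSeq_bounds j
    set s := sSeq j with hs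
    have ht2 : (2:ℝ) ≤ s + 2 := by linarith
    have htle : s + 2 ≤ 17/8 := by linarith
    have ht0 : (s + 2 : ℝ) ≠ 0 := by linarith
    have hDpos : (0:ℝ) < (s+2)^2 + 1/4 := by positivity
    have hD0 : ((s+2)^2 + 1/4 : ℝ) ≠ 0 := ne_of_gt hDpos
    have hD4 : (4:ℝ) ≤ (s+2)^2 + 1/4 := by nlinarith
    have hDle : ((s+2)^2 + 1/4 : ℝ) ≤ 5 := by nlinarith
    have hz1 : (-2+I) + tval s = ((-(s+2) : ℝ):ℂ) + ((1/2 : ℝ):ℂ)*I := by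
      rw [tval]; push_cast; ring
    have hne1 : (-2+I) + tval s ≠ 0 := by
      rw [hz1]; exact mk_ne_zero_of_re (by linarith)
    set a : ℝ := -((s+2)/((s+2)^2 + 1/4)) with ha
    set b : ℝ := -(1/(2*((s+2)^2 + 1/4))) with hb
    have hxeq : ((a:ℝ):ℂ) + ((b:ℝ):ℂ)*I = 1/((-2+I) + tval s) := by
      rw [hz1]
      apply eq_one_div_mk
      rw [mk_mul_mk, mk_eq_one, ha, hb]
      constructor <;> field_simp <;> ring
    have hxf : ((a:ℝ):ℂ) + ((b:ℝ):ℂ)*I ∈ fund := by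
      have k1 : (s+2)/((s+2)^2+1/4) ≤ 1/2 := by
        rw [div_le_div_iff₀ hDpos (by norm_num)]; nlinarith
      have k2 : (0:ℝ) < (s+2)/((s+2)^2+1/4) := by positivity
      have k3 : (1:ℝ)/(2*((s+2)^2+1/4)) ≤ 1/2 := by
        rw [div_le_div_iff₀ (by positivity) (by norm_num)]; nlinarith
      have k4 : (0:ℝ) < 1/(2*((s+2)^2+1/4)) := by positivity
      apply mk_mem_fund <;> simp only [ha, hb] <;> linarith
    have hz2 : 2*I + (((a:ℝ):ℂ) + ((b:ℝ):ℂ)*I) = ((a : ℝ):ℂ) + ((2 + b : ℝ):ℂ)*I := by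
      push_cast; ring
    have hb2 : (2 + b : ℝ) ≠ 0 := by
      rw [hb]
      have : (1/(2*((s+2)^2 + 1/4)) : ℝ) ≤ 1/8 := by
        rw [div_le_div_iff₀ (by positivity) (by norm_num)]; nlinarith
      linarith
    have hne2 : 2*I + (((a:ℝ):ℂ) + ((b:ℝ):ℂ)*I) ≠ 0 := by
      rw [hz2]; exact mk_ne_zero_of_im hb2
    have hweq : tval (sSeq (j+1)) = 1/(2*I + (((a:ℝ):ℂ) + ((b:ℝ):ℂ)*I)) := by
      rw [hz2, sSeq_succ, ← hs, tval]
      apply eq_one_div_mk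
      rw [mk_mul_mk, mk_eq_one, ha, hb]
      constructor <;> field_simp <;> ring
    have hwf : tval (sSeq (j+1)) ∈ fund := by
      obtain ⟨h0', h8'⟩ := sSeq_bounds (j+1)
      rw [tval]
      apply mk_mem_fund <;> [linarith; linarith; linarith; norm_num]
    rw [Lt_succ]
    exact ⟨hwf, gauss_2I, _, ⟨hxf, gauss_head, tval s, ih, hne1, hxeq⟩, hne2, hweq⟩

/-! ### continuants along `Lv` -/

lemma cont_step {c q p : ℂ} {s ε s' : ℝ} (hε : ε^2 = 1) (hs' : 4*(s+2)*s' = 1)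
    (hs : 0 ≤ s) (hq : q ≠ 0)
    (hp : p = (((-s:ℝ):ℂ) + ((ε/2:ℝ):ℂ)*I) * q) (hc : c = ((2*ε:ℝ):ℂ)*I) :
    q + c*(p - 2*q) ≠ 0 ∧
      p - 2*q = (((-s':ℝ):ℂ) + ((-(ε/2):ℝ):ℂ)*I) * (q + c*(p - 2*q)) := by
  have hε' : ((ε:ℂ))^2 = 1 := by exact_mod_cast congrArg (fun x : ℝ => (x:ℂ)) hε
  have hs'' : 4*((s:ℂ)+2)*(s':ℂ) = 1 := by exact_mod_cast congrArg (fun x : ℝ => (x:ℂ)) hs'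
  have hεne : (ε:ℝ) ≠ 0 := by intro h; rw [h] at hε; norm_num at hε
  have hfac : q + c*(p - 2*q) = ((-2*(s+2)*ε : ℝ):ℂ) * I * q := by
    rw [hp, hc]; push_cast
    linear_combination ((ε:ℂ)^2*q) * Complex.I_sq - q * hε'
  constructor
  · rw [hfac]
    refine mul_ne_zero (mul_ne_zero ?_ I_ne_zero) hq
    simp only [ne_eq, ofReal_eq_zero]
    intro h
    have : (-2*(s+2)*ε : ℝ) ≠ 0 := by
      apply mul_ne_zero (mul_ne_zero (by norm_num) (by linarith)) hεne
    exact this h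
  · rw [hfac, hp]; push_cast
    linear_combination (-((s:ℂ)+2)*(ε:ℂ)^2*q) * Complex.I_sq + (((s:ℂ)+2)*q) * hε'
      + (-(ε:ℂ)*I/2*q) * hs''

lemma cont_Lv (j : ℕ) : contQ (Lv j) ≠ 0 ∧
    contP (Lv j) =
      (((-sSeq j:ℝ):ℂ) + (((if Even j then (1:ℝ) else -1)/2 : ℝ):ℂ)*I) * contQ (Lv j) := by
  induction j with
  | zero =>
    rw [Lv_zero]
    have hP : contP [-2*I] = 1 := by rw [contP_cons, contQ_nil]
    have hQ : contQ [-2*I] = -2*I := by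
      rw [contQ_cons, contP_nil, contQ_nil]; ring
    rw [hP, hQ, sSeq_zero]
    constructor
    · have h2 : (-2 : ℂ) ≠ 0 := by norm_num
      exact mul_ne_zero h2 I_ne_zero
    · simp only [Even.zero, if_true]
      push_cast
      linear_combination Complex.I_sq
  | succ j ih =>
    obtain ⟨hq, hp⟩ := ih
    obtain ⟨hs0, hs8⟩ := sSeq_bounds j
    set ε : ℝ := if Even j then (1:ℝ) else -1 with hεdef
    have hε : ε^2 = 1 := by
      by_cases h : Even j <;> simp [hεdef, h]
    have hc : (if Even j then (2*I:ℂ) else -2*I) = ((2*ε:ℝ):ℂ)*I := by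
      by_cases h : Even j <;> simp [hεdef, h] <;> push_cast <;> ring
    have hs' : 4*(sSeq j + 2)*(sSeq (j+1)) = 1 := by
      rw [sSeq_succ]
      field_simp
    have hstep := cont_step hε hs' hs0 hq hp hc
    have hflip : (if Even (j+1) then (1:ℝ) else -1) = -ε := by
      by_cases h : Even j <;> simp [hεdef, Nat.even_add_one, h]
    rw [Lv_succ, contP_cons, contQ_cons, contP_cons, contQ_cons, hflip]
    have e1 : contP (Lv j) + (-2) * contQ (Lv j) = contP (Lv j) - 2 * contQ (Lv j) := by ring
    have goal1 : contQ (Lv j) + (if Even j then (2*I:ℂ) else -2*I) * (contP (Lv j) + -2 * contQ (Lv j)) ≠ 0 := by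
      rw [e1]; exact hstep.1
    refine ⟨goal1, ?_⟩
    rw [e1, show (-ε/2 : ℝ) = -(ε/2) by ring]
    exact hstep.2

/-! ### the head value `w` -/

noncomputable def wconst (k : ℕ) : ℂ := 1/(((3 - sSeq (2*k) : ℝ):ℂ) + ((1/2:ℝ):ℂ)*I)

lemma wconst_mk (k : ℕ) : wconst k =
    (((3 - sSeq (2*k))/((3 - sSeq (2*k))^2 + 1/4) : ℝ):ℂ)
      + ((-(1/(2*((3 - sSeq (2*k))^2 + 1/4))) : ℝ):ℂ)*I := by
  obtain ⟨hs0, hs8⟩ := sSeq_bounds (2*k)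
  set s := sSeq (2*k)
  have hu : (23:ℝ)/8 ≤ 3 - s := by linarith
  have hDpos : (0:ℝ) < (3-s)^2 + 1/4 := by positivity
  rw [wconst]
  symm
  apply eq_one_div_mk
  rw [mk_mul_mk, mk_eq_one]
  constructor <;> field_simp <;> ring

lemma wconst_mem_fund (k : ℕ) : wconst k ∈ fund := by
  obtain ⟨hs0, hs8⟩ := sSeq_bounds (2*k)
  rw [wconst_mk]
  set s := sSeq (2*k)
  have hu : (23:ℝ)/8 ≤ 3 - s := by linarith
  have hu3 : (3 - s : ℝ) ≤ 3 := by linarith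
  have hDpos : (0:ℝ) < (3-s)^2 + 1/4 := by positivity
  have k1 : (3-s)/((3-s)^2+1/4) < 1/2 := by
    rw [div_lt_div_iff₀ hDpos (by norm_num)]; nlinarith
  have k2 : (0:ℝ) < (3-s)/((3-s)^2+1/4) := by positivity
  have k3 : (1:ℝ)/(2*((3-s)^2+1/4)) ≤ 1/2 := by
    rw [div_le_div_iff₀ (by positivity) (by norm_num)]; nlinarith
  have k4 : (0:ℝ) < 1/(2*((3-s)^2+1/4)) := by positivity
  apply mk_mem_fund <;> linarith [k1, k2, k3, k4]

lemma chain_vt (k : ℕ) : ChainP (vtSeq k) (wconst k) := by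
  rw [vtSeq_eq]
  obtain ⟨hs0, hs8⟩ := sSeq_bounds (2*k)
  have hz : (3+I) + tval (sSeq (2*k)) = ((3 - sSeq (2*k) : ℝ):ℂ) + ((1/2:ℝ):ℂ)*I := by
    rw [tval]; push_cast; ring
  have hne : (3+I) + tval (sSeq (2*k)) ≠ 0 := by
    rw [hz]; exact mk_ne_zero_of_re (by linarith)
  refine ⟨wconst_mem_fund k, gauss_3I, tval (sSeq (2*k)), chain_Lt (2*k), hne, ?_⟩
  rw [wconst, hz]

lemma cont_v (k : ℕ) : contQ (vSeq k) ≠ 0 ∧ contP (vSeq k) / contQ (vSeq k) = wconst k := by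
  obtain ⟨hq, hp⟩ := cont_Lv (2*k)
  obtain ⟨hs0, hs8⟩ := sSeq_bounds (2*k)
  have heven : Even (2*k) := ⟨k, two_mul k⟩
  rw [if_pos heven] at hp
  rw [vSeq_eq, contP_cons, contQ_cons]
  have hden : contP (Lv (2*k)) + 3 * contQ (Lv (2*k))
      = (((3 - sSeq (2*k) : ℝ):ℂ) + ((1/2:ℝ):ℂ)*I) * contQ (Lv (2*k)) := by
    rw [hp]; push_cast; ring
  have hne : (((3 - sSeq (2*k) : ℝ):ℂ) + ((1/2:ℝ):ℂ)*I) ≠ 0 :=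
    mk_ne_zero_of_re (by linarith)
  constructor
  · rw [hden]; exact mul_ne_zero hne hq
  · rw [hden, wconst]
    rw [mul_comm _ (contQ (Lv (2*k))), ← div_div]
    rw [div_self hq]

end RatMemCyl

open RatMemCyl in
theorem rat_mem_cylinder_vtSeq (a : List ℂ) (ha : ∀ x ∈ a, x ∈ setI) (hfull : FullSeq a)
    (k : ℕ) (hk : 1 ≤ k) :
    contP (a ++ vSeq k) / contQ (a ++ vSeq k) ∈ cylinder (a ++ vtSeq k) := by
  classical
  obtain ⟨hq, hpq⟩ := cont_v k
  have hwf : wconst k ∈ fund := wconst_mem_fund k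
  have hwproto : wconst k ∈ proto a := by rw [hfull]; exact hwf
  obtain ⟨z, hzc, hzw⟩ := hwproto
  obtain ⟨hQ, hPQ⟩ := cont_append_eq ha hzc hzw hq hpq
  rw [hPQ]
  have hdig := (chain_vt k).digits
  refine ⟨hzc.1, ?_⟩
  intro j
  rcases j with ⟨j, hj⟩
  simp only [List.length_append] at hj
  by_cases h : j < a.length
  · have h1 := hzc.2 ⟨j, h⟩
    simp only [Fin.val_mk, List.get_eq_getElem] at h1 ⊢
    rw [List.getElem_append_left h]
    exact h1
  · push_neg at h
    obtain ⟨m, rfl⟩ : ∃ m, j = a.length + m := ⟨j - a.length, by omega⟩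
    have hm : m < (vtSeq k).length := by omega
    have hiter : hT^[a.length + m] z = hT^[m] (wconst k) := by
      rw [Nat.add_comm, Function.iterate_add_apply, hzw]
    have h2 := hdig ⟨m, hm⟩
    simp only [Fin.val_mk, List.get_eq_getElem] at h2 ⊢
    rw [List.getElem_append_right (by omega)]
    have : hA z (a.length + m) = hA (wconst k) m := by
      rw [hA, hA, hiter]
    rw [this]
    convert h2 using 3
    omega
end

section
/- Let a ∈ Iⁿ be a full sequence and b ∈ ℤ[i] with |b| ≥ 2√2 and Im b ≥ 1. Set p = p(a v_k) and q = q(a v_k). Then for every k ≥ 1 and every z ∈ C(a v_k b), one has dd(z, p/q) = 3k + 2. -/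
open Complex MeasureTheory Filter Set
open scoped ENNReal

noncomputable section
lemma ng_re (z : ℂ) : (nearestGauss z).re = (⌊z.re + 1/2⌋ : ℤ) := by
  simp [nearestGauss]
lemma ng_im (z : ℂ) : (nearestGauss z).im = (⌊z.im + 1/2⌋ : ℤ) := by
  simp [nearestGauss]

lemma sub_ng_mem_fund (z : ℂ) : z - nearestGauss z ∈ fund := by
  constructor <;> simp only [Complex.sub_re, Complex.sub_im, ng_re, ng_im, Set.mem_Ico]
  · constructor
    · have := Int.floor_le (z.re + 1/2); linarith
    · have := Int.lt_floor_add_one (z.re + 1/2); linarith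
  · constructor
    · have := Int.floor_le (z.im + 1/2); linarith
    · have := Int.lt_floor_add_one (z.im + 1/2); linarith

lemma ng_eq_zero_of_mem_fund {z : ℂ} (h : z ∈ fund) : nearestGauss z = 0 := by
  obtain ⟨⟨h1, h2⟩, ⟨h3, h4⟩⟩ := h
  have e1 : ⌊z.re + 1/2⌋ = 0 := by rw [Int.floor_eq_zero_iff]; constructor <;> simp at * <;> linarith
  have e2 : ⌊z.im + 1/2⌋ = 0 := by rw [Int.floor_eq_zero_iff]; constructor <;> simp at * <;> linarith
  rw [nearestGauss, e1, e2]; simp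

lemma ng_add_gauss (m n : ℤ) (z : ℂ) :
    nearestGauss (((m:ℂ) + (n:ℂ)*I) + z) = ((m:ℂ) + (n:ℂ)*I) + nearestGauss z := by
  have hre : (((m:ℂ) + (n:ℂ)*I) + z).re = (m:ℝ) + z.re := by simp
  have him : (((m:ℂ) + (n:ℂ)*I) + z).im = (n:ℝ) + z.im := by simp
  rw [nearestGauss, nearestGauss, hre, him]
  rw [add_assoc (m:ℝ), add_assoc (n:ℝ), Int.floor_intCast_add, Int.floor_intCast_add]
  push_cast
  ring

lemma zero_mem_fund : (0:ℂ) ∈ fund := by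
  constructor <;> simp <;> norm_num

lemma gauss_add_fund_ne_zero {x s : ℂ} (hx : (∃ a b : ℤ, x = (a:ℂ) + (b:ℂ)*I)) (hx0 : x ≠ 0)
    (hs : s ∈ fund) : x + s ≠ 0 := by
  obtain ⟨m, n, rfl⟩ := hx
  intro h
  obtain ⟨⟨h1, h2⟩, ⟨h3, h4⟩⟩ := hs
  have hre : (m:ℝ) + s.re = 0 := by
    have := congrArg Complex.re h; simpa using this
  have him : (n:ℝ) + s.im = 0 := by
    have := congrArg Complex.im h; simpa using this
  have hm : m = 0 := by
    have : |(m:ℝ)| < 1 := by rw [abs_lt]; constructor <;> nlinarith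
    exact_mod_cast (by exact_mod_cast Int.abs_lt_one_iff.mp (by exact_mod_cast this) : m = 0)
  have hn : n = 0 := by
    have : |(n:ℝ)| < 1 := by rw [abs_lt]; constructor <;> nlinarith
    exact Int.abs_lt_one_iff.mp (by exact_mod_cast this)
  apply hx0; simp [hm, hn]





/-- fold for continued fraction value -/
def cfF (u : List ℂ) (t : ℂ) : ℂ := u.foldr (fun x s => 1/(x + s)) t

@[simp] lemma cfF_nil (t : ℂ) : cfF [] t = t := rfl
@[simp] lemma cfF_cons (x : ℂ) (u : List ℂ) (t : ℂ) : cfF (x :: u) t = 1/(x + cfF u t) := rfl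
lemma cfF_append (u v : List ℂ) (t : ℂ) : cfF (u ++ v) t = cfF u (cfF v t) :=
  List.foldr_append

lemma hT_mem_fund (z : ℂ) : hT z ∈ fund := sub_ng_mem_fund _

lemma hA_succ (z : ℂ) (n : ℕ) : hA z (n+1) = hA (hT z) n := by
  simp [hA, Function.iterate_succ_apply]

lemma hA_eq_zero {z : ℂ} {n : ℕ} (h : hT^[n] z = 0) : hA z n = 0 := by
  rw [hA, h]
  norm_num [nearestGauss]

/-- step lemma: if s ∈ fund, x nonzero Gaussian, then hT (1/(x+s)) = s and quotient is x -/
lemma hT_step {x s : ℂ} (hxg : IsGaussInt x) (hx0 : x ≠ 0) (hs : s ∈ fund) :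
    hT (1/(x+s)) = s ∧ hA (1/(x+s)) 0 = x := by
  have hne : x + s ≠ 0 := gauss_add_fund_ne_zero hxg hx0 hs
  have hinv : 1/(1/(x+s)) = x + s := one_div_one_div _
  have hng : nearestGauss (x + s) = x := by
    obtain ⟨m, n, rfl⟩ := hxg
    rw [ng_add_gauss, ng_eq_zero_of_mem_fund hs, add_zero]
  constructor
  · rw [hT, hinv, hng]; ring
  · rw [hA, Function.iterate_zero_apply, hinv, hng]

/-- L2: quotients of cfF u t -/
lemma cfF_quotients (u : List ℂ) (t : ℂ) (ht : t ∈ fund)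
    (hg : ∀ x ∈ u, IsGaussInt x ∧ x ≠ 0)
    (hf : ∀ m, 1 ≤ m → m ≤ u.length → cfF (u.drop m) t ∈ fund) :
    (∀ m ≤ u.length, hT^[m] (cfF u t) = cfF (u.drop m) t) ∧
    (∀ j, (hj : j < u.length) → hA (cfF u t) j = u[j]) := by
  induction u with
  | nil =>
    refine ⟨fun m hm => by simp [Nat.le_zero.mp hm], fun j hj => by simp at hj⟩
  | cons x v ih =>
    have hs : cfF v t ∈ fund := by
      have := hf 1 le_rfl (by simp)
      simpa using this
    obtain ⟨hx, hx0⟩ := hg x (by simp)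
    obtain ⟨hTs, hAx⟩ := hT_step hx hx0 hs
    have ihv := ih (fun y hy => hg y (by simp [hy]))
      (fun m hm1 hm2 => by
        have := hf (m+1) (by omega) (by simpa using Nat.succ_le_succ hm2)
        simpa using this)
    constructor
    · intro m hm
      match m with
      | 0 => simp
      | m+1 =>
        rw [Function.iterate_succ_apply, cfF_cons, hTs]
        rw [List.drop_succ_cons]
        exact ihv.1 m (by simpa using Nat.succ_le_succ_iff.mp hm)
    · intro j hj
      match j with
      | 0 => simpa using hAx
      | j+1 =>
        rw [hA_succ, cfF_cons, hTs]
        simpa using ihv.2 j (by simpa using Nat.succ_lt_succ_iff.mp hj)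

/-- L1: expansion of z along its quotients -/
lemma expand_along (u : List ℂ) : ∀ z : ℂ,
    (∀ j, (hj : j < u.length) → hA z j = u[j]) → (∀ x ∈ u, x ≠ 0) →
    ∀ m ≤ u.length, hT^[m] z = cfF (u.drop m) (hT^[u.length] z) := by
  induction u with
  | nil => intro z _ _ m hm; simp [Nat.le_zero.mp hm]
  | cons x v ih =>
    intro z hq hne m hm
    have hx0 : x ≠ 0 := hne x (by simp)
    have hz0 : z ≠ 0 := by
      intro h
      apply hx0
      have h1 : hA z 0 = x := by exact hq 0 (by simp)
      rw [← h1]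
      exact hA_eq_zero (by simpa using h)
    have hng : nearestGauss (1/z) = x := by exact hq 0 (by simp)
    have hTz : hT z = 1/z - x := by rw [hT, hng]
    have hzrec : z = 1/(x + hT z) := by
      rw [hTz]
      have : x + (1/z - x) = 1/z := by ring
      rw [this, one_div_one_div]
    have ihv := ih (hT z) (fun j hj => by
        rw [← hA_succ]; exact hq (j+1) (by simpa using Nat.succ_lt_succ hj))
      (fun y hy => hne y (by simp [hy]))
    have hlen : hT^[(x :: v).length] z = hT^[v.length] (hT z) := by
      simp [Function.iterate_succ_apply]
    match m with
    | 0 =>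
      have h0 : cfF v (hT^[v.length] (hT z)) = hT z := by
        have := ihv 0 (by simp); simpa using this.symm
      rw [Function.iterate_zero_apply, List.drop_zero, cfF_cons, hlen, h0]
      exact hzrec
    | m+1 =>
      rw [Function.iterate_succ_apply, List.drop_succ_cons, hlen]
      exact ihv m (by simpa using Nat.succ_le_succ_iff.mp hm)

def Q1 (t : ℂ) : Prop := t.im = -(1/2) ∧ -(1/2) ≤ t.re ∧ t.re ≤ 0
def Q2 (t : ℂ) : Prop := t.re^2 + (t.im+1)^2 = 1 ∧ -(1/2) ≤ t.re ∧ t.re ≤ -(1/4) ∧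
  -(1/2) ≤ t.im ∧ t.im ≤ 0

lemma Q1_mem_fund {t : ℂ} (h : Q1 t) : t ∈ fund := by
  obtain ⟨h1, h2, h3⟩ := h
  constructor <;> simp [Set.mem_Ico] <;> constructor <;> linarith

lemma Q2_mem_fund {t : ℂ} (h : Q2 t) : t ∈ fund := by
  obtain ⟨h1, h2, h3, h4, h5⟩ := h
  constructor <;> simp [Set.mem_Ico] <;> constructor <;> linarith

lemma inv_re_im (c : ℂ) : (1/c).re = c.re / (c.re^2 + c.im^2) ∧
    (1/c).im = -c.im / (c.re^2 + c.im^2) := by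
  rw [one_div]
  rw [Complex.inv_re, Complex.inv_im, Complex.normSq_apply]
  constructor <;> ring_nf

lemma stepA {t : ℂ} (h : t = 0 ∨ Q2 t) : Q1 (1/(2*I + t)) := by
  have hre : (2*I + t).re = t.re := by simp
  have him : (2*I + t).im = t.im + 2 := by simp; ring
  obtain ⟨h1, h2⟩ := inv_re_im (2*I + t)
  rw [hre, him] at h1 h2
  rcases h with rfl | ⟨hc, hx1, hx2, hy1, hy2⟩
  · constructor
    · rw [h2]; norm_num
    · rw [h1]; norm_num
  · set x := t.re; set y := t.im
    have hN : x^2 + (y+2)^2 = 2*(y+2) := by nlinarith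
    have hypos : (0:ℝ) < y + 2 := by linarith
    constructor
    · rw [h2, hN]
      field_simp
    · rw [h1, hN]
      constructor
      · rw [le_div_iff₀ (by linarith : (0:ℝ) < 2*(y+2))]; nlinarith
      · apply div_nonpos_of_nonpos_of_nonneg <;> linarith

lemma stepB {t : ℂ} (h : Q1 t) : Q2 (1/((-2+I) + t)) := by
  obtain ⟨h1, h2, h3⟩ := h
  have hre : ((-2+I) + t).re = t.re - 2 := by simp; ring
  have him : ((-2+I) + t).im = 1/2 := by simp [h1]; ring
  obtain ⟨e1, e2⟩ := inv_re_im ((-2+I) + t)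
  rw [hre, him] at e1 e2
  set x := t.re
  have hN : (0:ℝ) < (x-2)^2 + (1/2)^2 := by positivity
  have hN4 : (4:ℝ) ≤ (x-2)^2 + (1/2)^2 := by nlinarith
  refine ⟨?_, ?_, ?_, ?_, ?_⟩
  · rw [e1, e2]
    field_simp
    ring
  · rw [e1, le_div_iff₀ hN]; nlinarith
  · rw [e1, div_le_iff₀ hN]; nlinarith
  · rw [e2, le_div_iff₀ hN]; nlinarith
  · rw [e2]; apply div_nonpos_of_nonpos_of_nonneg <;> linarith

lemma topStep {t : ℂ} (h : Q1 t) : 1/((3+I) + t) ∈ fund := by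
  obtain ⟨h1, h2, h3⟩ := h
  have hre : ((3+I) + t).re = 3 + t.re := by simp
  have him : ((3+I) + t).im = 1/2 := by simp [h1]; ring
  obtain ⟨e1, e2⟩ := inv_re_im ((3+I) + t)
  rw [hre, him] at e1 e2
  set x := t.re
  have hN : (0:ℝ) < (3+x)^2 + (1/2)^2 := by positivity
  have hN4 : (4:ℝ) ≤ (3+x)^2 + (1/2)^2 := by nlinarith
  constructor
  · rw [Set.mem_Ico, e1]
    constructor
    · rw [le_div_iff₀ hN]; nlinarith
    · rw [div_lt_iff₀ hN]; nlinarith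
  · rw [Set.mem_Ico, e2]
    constructor
    · rw [le_div_iff₀ hN]; nlinarith
    · rw [div_lt_iff₀ hN]; nlinarith



def blt : List ℂ := [-2+Complex.I, 2*Complex.I, -2+Complex.I, 2*Complex.I]
def Lt (k : ℕ) : List ℂ := (List.replicate k blt).flatten

lemma Lt_succ (k : ℕ) : Lt (k+1) = blt ++ Lt k := by
  simp [Lt, List.replicate_succ]

lemma Lt_length (k : ℕ) : (Lt k).length = 4 * k := by
  induction k with
  | zero => simp [Lt]
  | succ k ih => rw [Lt_succ, List.length_append, ih]; simp [blt]; ring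

lemma blockInv (k : ℕ) : (cfF (Lt k) 0 = 0 ∨ Q2 (cfF (Lt k) 0)) ∧
    (∀ j ≤ 4 * k, cfF ((Lt k).drop j) 0 ∈ fund) := by
  induction k with
  | zero =>
    refine ⟨Or.inl rfl, fun j hj => ?_⟩
    interval_cases j
    simpa [Lt] using zero_mem_fund
  | succ k ih =>
    obtain ⟨hinv, hfund⟩ := ih
    set t := cfF (Lt k) 0 with ht
    have h1 : Q1 (cfF ((2*I) :: Lt k) 0) := by simpa using stepA hinv
    have h2 : Q2 (cfF ((-2+I) :: (2*I) :: Lt k) 0) := by simpa using stepB h1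
    have h3 : Q1 (cfF ((2*I) :: (-2+I) :: (2*I) :: Lt k) 0) := by
      simpa using stepA (Or.inr h2)
    have h4 : Q2 (cfF (blt ++ Lt k) 0) := by
      have : cfF (blt ++ Lt k) 0 = 1/((-2+I) + cfF ((2*I) :: (-2+I) :: (2*I) :: Lt k) 0) := by
        simp [blt]
      rw [this]; exact stepB h3
    refine ⟨?_, ?_⟩
    · rw [Lt_succ]; exact Or.inr h4
    · intro j hj
      rw [Lt_succ]
      rcases Nat.lt_or_ge j 4 with h4' | h4'
      · interval_cases j
        · exact Q2_mem_fund h4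
        · exact Q1_mem_fund (by simpa [blt] using h3)
        · exact Q2_mem_fund (by simpa [blt] using h2)
        · exact Q1_mem_fund (by simpa [blt] using h1)
      · have : (blt ++ Lt k).drop j = (Lt k).drop (j - 4) := by
          rw [List.drop_append]
          have : (blt : List ℂ).drop j = [] := by
            apply List.drop_eq_nil_of_le; simp [blt]; omega
          simp [this, blt]
          omega
        rw [this]
        exact hfund (j-4) (by omega)

lemma vt_fund (k : ℕ) : cfF (vtSeq k) 0 ∈ fund := by
  obtain ⟨hinv, _⟩ := blockInv k
  have h1 : Q1 (cfF ((2*I) :: Lt k) 0) := by simpa using stepA hinv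
  have : cfF (vtSeq k) 0 = 1/((3+I) + cfF ((2*I) :: Lt k) 0) := by
    simp [vtSeq, Lt, blt]
  rw [this]
  exact topStep h1

lemma vt_suffix (k : ℕ) : ∀ m, 1 ≤ m → m ≤ (vtSeq k).length →
    cfF ((vtSeq k).drop m) 0 ∈ fund := by
  obtain ⟨hinv, hfund⟩ := blockInv k
  have hlen : (vtSeq k).length = 2 + 4 * k := by
    simp [vtSeq]
    have := Lt_length k
    simp [Lt] at this
    omega
  intro m hm1 hm2
  match m with
  | 1 =>
    have h1 : Q1 (cfF ((2*I) :: Lt k) 0) := by simpa using stepA hinv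
    have : (vtSeq k).drop 1 = (2*I) :: Lt k := by
      simp only [vtSeq, Lt, blt, List.cons_append, List.nil_append, List.drop_succ_cons,
        List.drop_zero]
    rw [this]
    exact Q1_mem_fund h1
  | (j+2) =>
    have : (vtSeq k).drop (j+2) = (Lt k).drop j := by simp [vtSeq, Lt, blt]
    rw [this]
    exact hfund j (by omega)





def pMat (u : List ℂ) : Matrix (Fin 2) (Fin 2) ℂ := (u.map fun a => !![a, 1; 1, 0]).prod

lemma pMat_append (u v : List ℂ) : pMat (u ++ v) = pMat u * pMat v := by
  simp [pMat, List.map_append, List.prod_append]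

lemma cfMatrix_eq (u : List ℂ) : cfMatrix u = !![0, 1; 1, 0] * pMat u := rfl

lemma contP_eq (u : List ℂ) : contP u = pMat u 1 0 := by
  simp [contP, cfMatrix_eq, Matrix.mul_apply, Fin.sum_univ_two, Matrix.cons_val_zero,
    Matrix.cons_val_one]

lemma contQ_eq (u : List ℂ) : contQ u = pMat u 0 0 := by
  simp [contQ, cfMatrix_eq, Matrix.mul_apply, Fin.sum_univ_two]

lemma contP_nil : contP [] = 0 := by simp [contP_eq, pMat]
lemma contQ_nil : contQ [] = 1 := by simp [contQ_eq, pMat]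

lemma pMat_cons (x : ℂ) (u : List ℂ) : pMat (x :: u) = !![x, 1; 1, 0] * pMat u := by
  simp [pMat]

lemma contP_cons (x : ℂ) (u : List ℂ) : contP (x :: u) = contQ u := by
  simp [contP_eq, contQ_eq, pMat_cons, Matrix.mul_apply, Fin.sum_univ_two]

lemma contQ_cons (x : ℂ) (u : List ℂ) : contQ (x :: u) = x * contQ u + contP u := by
  simp [contP_eq, contQ_eq, pMat_cons, Matrix.mul_apply, Fin.sum_univ_two]

lemma contP_app (u v : List ℂ) : contP (u ++ v) = contP u * contQ v + pMat u 1 1 * contP v := by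
  simp only [contP_eq, contQ_eq, pMat_append, Matrix.mul_apply, Fin.sum_univ_two]

lemma contQ_app (u v : List ℂ) : contQ (u ++ v) = contQ u * contQ v + pMat u 0 1 * contP v := by
  simp only [contP_eq, contQ_eq, pMat_append, Matrix.mul_apply, Fin.sum_univ_two]

/-- value equals continuant ratio -/
lemma valEq (u : List ℂ) (hg : ∀ x ∈ u, IsGaussInt x ∧ x ≠ 0)
    (hf : ∀ m, 1 ≤ m → m ≤ u.length → cfF (u.drop m) 0 ∈ fund) :
    contQ u ≠ 0 ∧ contP u = cfF u 0 * contQ u := by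
  induction u with
  | nil => simp [contP_nil, contQ_nil]
  | cons x v ih =>
    obtain ⟨hq, hpq⟩ := ih (fun y hy => hg y (by simp [hy]))
      (fun m hm1 hm2 => by
        have := hf (m+1) (by omega) (by simpa using Nat.succ_le_succ hm2)
        simpa using this)
    have hs : cfF v 0 ∈ fund := by
      have := hf 1 le_rfl (by simp)
      simpa using this
    obtain ⟨hx, hx0⟩ := hg x (by simp)
    have hne : x + cfF v 0 ≠ 0 := gauss_add_fund_ne_zero hx hx0 hs
    constructor
    · rw [contQ_cons, hpq]
      have : x * contQ v + cfF v 0 * contQ v = (x + cfF v 0) * contQ v := by ring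
      rw [this]
      exact mul_ne_zero hne hq
    · rw [contP_cons, contQ_cons, cfF_cons, hpq]
      field_simp



def blv : List ℂ := [-2, 2*Complex.I, -2, -2*Complex.I]
def Lv (k : ℕ) : List ℂ := (List.replicate k blv).flatten

lemma Lv_succ' (k : ℕ) : Lv (k+1) = Lv k ++ blv := by
  simp [Lv, List.replicate_succ']

lemma vSeq_eq (k : ℕ) : vSeq k = [3, -2*Complex.I] ++ Lv k := rfl
lemma vtSeq_eq (k : ℕ) : vtSeq k = [3+Complex.I, 2*Complex.I] ++ Lt k := rfl

lemma Lt_succ' (k : ℕ) : Lt (k+1) = Lt k ++ blt := by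
  simp [Lt, List.replicate_succ']

def Nmat : Matrix (Fin 2) (Fin 2) ℂ := !![1, Complex.I; 0, 1]

lemma Bv_eq : pMat blv = !![17+4*Complex.I, -4+8*Complex.I; -8, 1-4*Complex.I] := by
  simp only [blv, pMat, List.map_cons, List.map_nil, List.prod_cons, List.prod_nil, mul_one,
    Matrix.mul_fin_two]
  ext i j
  fin_cases i <;> fin_cases j <;> simp [Complex.ext_iff] <;> norm_num

lemma Bt_eq : pMat blt = !![-17+4*Complex.I, 4+8*Complex.I; 8, -1-4*Complex.I] := by
  simp only [blt, pMat, List.map_cons, List.map_nil, List.prod_cons, List.prod_nil, mul_one,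
    Matrix.mul_fin_two]
  ext i j
  fin_cases i <;> fin_cases j <;> simp [Complex.ext_iff] <;> norm_num

lemma NBv_eq : Nmat * pMat blv = -(pMat blt * Nmat) := by
  rw [Bv_eq, Bt_eq, Nmat]
  simp only [Matrix.mul_fin_two]
  ext i j
  fin_cases i <;> fin_cases j <;> simp [Complex.ext_iff] <;> norm_num

lemma base_eq : pMat [(3:ℂ), -2*Complex.I] =
    (-1 : ℂ) • (pMat [3+Complex.I, 2*Complex.I] * Nmat) := by
  simp only [pMat, List.map_cons, List.map_nil, List.prod_cons, List.prod_nil, mul_one, Nmat,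
    Matrix.mul_fin_two, Matrix.smul_of]
  ext i j
  fin_cases i <;> fin_cases j <;> simp [Complex.ext_iff] <;> norm_num

lemma pMat_sign (k : ℕ) :
    pMat (vSeq k) = ((-1:ℂ)^(k+1)) • (pMat (vtSeq k) * Nmat) := by
  induction k with
  | zero =>
    have : vSeq 0 = [(3:ℂ), -2*Complex.I] := by simp [vSeq]
    have ht0 : vtSeq 0 = [3+Complex.I, 2*Complex.I] := by simp [vtSeq]
    rw [this, ht0, base_eq]
    norm_num
  | succ k ih =>
    have hv : vSeq (k+1) = vSeq k ++ blv := by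
      rw [vSeq_eq, vSeq_eq, Lv_succ']; simp
    have hts : vtSeq (k+1) = vtSeq k ++ blt := by
      rw [vtSeq_eq, vtSeq_eq, Lt_succ']; simp
    rw [hv, hts, pMat_append, pMat_append, ih]
    rw [Matrix.smul_mul, mul_assoc, NBv_eq]
    rw [Matrix.mul_neg, ← mul_assoc]
    rw [smul_neg, ← neg_smul]
    ring_nf

lemma cont_sign (k : ℕ) : contP (vSeq k) = ((-1:ℂ)^(k+1)) * contP (vtSeq k) ∧
    contQ (vSeq k) = ((-1:ℂ)^(k+1)) * contQ (vtSeq k) := by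
  have h := pMat_sign k
  constructor
  · rw [contP_eq, contP_eq, h]
    simp [Nmat, Matrix.mul_apply, Fin.sum_univ_two]
  · rw [contQ_eq, contQ_eq, h]
    simp [Nmat, Matrix.mul_apply, Fin.sum_univ_two]

lemma Lv_length (k : ℕ) : (Lv k).length = 4 * k := by
  induction k with
  | zero => simp [Lv]
  | succ k ih =>
    have : Lv (k+1) = blv ++ Lv k := by simp [Lv, List.replicate_succ]
    rw [this, List.length_append, ih]; simp [blv]; ring

lemma flatten_replicate_get (l : List ℂ) (hl : l.length = 4) (k j : ℕ)
    (hj : j < ((List.replicate k l).flatten).length) (hj4 : j % 4 < l.length) :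
    ((List.replicate k l).flatten)[j] = l[j % 4] := by
  induction k generalizing j with
  | zero => simp at hj
  | succ k ih =>
    have hfl : (List.replicate (k+1) l).flatten = l ++ (List.replicate k l).flatten := by
      simp [List.replicate_succ]
    rcases Nat.lt_or_ge j 4 with h | h
    · have hjl : j < l.length := by omega
      simp_rw [hfl]
      rw [List.getElem_append_left hjl]
      congr 1
      omega
    · have hlen : j - l.length < ((List.replicate k l).flatten).length := by
        simp_rw [hfl] at hj
        rw [List.length_append] at hj
        omega
      simp_rw [hfl]
      rw [List.getElem_append_right (by omega)]
      have hmod : (j - l.length) % 4 = j % 4 := by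
        rw [hl]
        omega
      rw [ih (j - l.length) hlen (by omega)]
      congr 1

lemma vSeq_length (k : ℕ) : (vSeq k).length = 2 + 4*k := by
  rw [vSeq_eq, List.length_append, Lv_length]; simp

lemma vtSeq_length (k : ℕ) : (vtSeq k).length = 2 + 4*k := by
  rw [vtSeq_eq, List.length_append, Lt_length]; simp

def Pf (j : ℕ) : Prop := j = 0 ∨ j = 1 ∨ (2 ≤ j ∧ (j-2) % 4 ≠ 1)

instance : DecidablePred Pf := fun j => by unfold Pf; infer_instance

lemma vSeq_get2 (k j : ℕ) (h : j < 4*k) :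
    (vSeq k)[j+2]'(by rw [vSeq_length]; omega) =
      blv[j % 4]'(by simp [blv]; omega) := by
  have h0 : (vSeq k)[j+2]'(by rw [vSeq_length]; omega) = (Lv k)[j]'(by rw [Lv_length]; omega) := rfl
  rw [h0]
  exact flatten_replicate_get blv (by simp [blv]) k j (by simp only [List.length_flatten, List.map_replicate, List.sum_replicate, smul_eq_mul]; simp [blv]; omega) (by simp [blv]; omega)

lemma vtSeq_get2 (k j : ℕ) (h : j < 4*k) :
    (vtSeq k)[j+2]'(by rw [vtSeq_length]; omega) =
      blt[j % 4]'(by simp [blt]; omega) := by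
  have h0 : (vtSeq k)[j+2]'(by rw [vtSeq_length]; omega) = (Lt k)[j]'(by rw [Lt_length]; omega) := rfl
  rw [h0]
  exact flatten_replicate_get blt (by simp [blt]) k j (by simp only [List.length_flatten, List.map_replicate, List.sum_replicate, smul_eq_mul]; simp [blt]; omega) (by simp [blt]; omega)

lemma entries_ne_iff (k j : ℕ) (h1 : j < (vSeq k).length) (h2 : j < (vtSeq k).length) :
    ((vSeq k)[j] ≠ (vtSeq k)[j]) ↔ Pf j := by
  match j with
  | 0 =>
    have e1 : (vSeq k)[0] = 3 := rfl
    have e2 : (vtSeq k)[0] = 3 + Complex.I := rfl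
    rw [e1, e2]
    have : (3:ℂ) ≠ 3 + Complex.I := by
      intro h
      have := congrArg Complex.im h
      simp at this
    simp [Pf, this]
  | 1 =>
    have e1 : (vSeq k)[1] = -2*Complex.I := rfl
    have e2 : (vtSeq k)[1] = 2*Complex.I := rfl
    rw [e1, e2]
    have : (-(2*Complex.I) : ℂ) ≠ 2*Complex.I := by
      intro h
      have := congrArg Complex.im h
      simp at this
      linarith
    simp [Pf]
    simpa using this
  | (j+2) =>
    rw [vSeq_length] at h1
    rw [vSeq_get2 k j (by omega), vtSeq_get2 k j (by omega)]
    have hPf : Pf (j+2) ↔ j % 4 ≠ 1 := by unfold Pf; omega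
    rw [hPf]
    have h4 : j % 4 = 0 ∨ j % 4 = 1 ∨ j % 4 = 2 ∨ j % 4 = 3 := by omega
    have n1 : (-2:ℂ) ≠ -2 + Complex.I := by
      intro h; have := congrArg Complex.im h; simp at this
    have n3 : (-(2*Complex.I):ℂ) ≠ 2*Complex.I := by
      intro h; have := congrArg Complex.im h; simp at this; linarith
    rcases h4 with h | h | h | h <;> simp only [h] <;>
      simp [blv, blt, n1, n3, h]

lemma count_lemma (k : ℕ) : ((Finset.range (2+4*k)).filter Pf).card = 3*k+2 := by
  induction k with
  | zero => decide
  | succ k ih =>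
    have e : 2+4*(k+1) = (((2+4*k)+1)+1)+1+1 := by ring
    rw [e]
    rw [Finset.range_add_one, Finset.filter_insert, if_pos (by unfold Pf; omega),
      Finset.card_insert_of_notMem (by simp)]
    rw [Finset.range_add_one, Finset.filter_insert, if_pos (by unfold Pf; omega),
      Finset.card_insert_of_notMem (by simp)]
    rw [Finset.range_add_one, Finset.filter_insert, if_neg (by unfold Pf; omega)]
    rw [Finset.range_add_one, Finset.filter_insert, if_pos (by unfold Pf; omega),
      Finset.card_insert_of_notMem (by simp)]
    rw [ih]
    ring








lemma ent_vt (k : ℕ) : ∀ x ∈ vtSeq k, IsGaussInt x ∧ x ≠ 0 := by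
  intro x hx
  have hx' : x = 3+Complex.I ∨ x = 2*Complex.I ∨ x = -2+Complex.I := by
    rcases List.mem_append.mp hx with h | h
    · simp only [List.mem_cons, List.not_mem_nil, or_false] at h
      tauto
    · obtain ⟨l, hl, hxl⟩ := List.mem_flatten.mp h
      rw [List.eq_of_mem_replicate hl] at hxl
      simp only [List.mem_cons, List.not_mem_nil, or_false] at hxl
      tauto
  rcases hx' with rfl | rfl | rfl
  · refine ⟨⟨3, 1, by push_cast; ring⟩, ?_⟩
    intro h; have := congrArg Complex.re h; simp at this
  · refine ⟨⟨0, 2, by push_cast; ring⟩, ?_⟩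
    simp
  · refine ⟨⟨-2, 1, by push_cast; ring⟩, ?_⟩
    intro h; have := congrArg Complex.re h; simp at this


end

theorem ddiff_eq_on_cylinder_a_vk_b (a : List ℂ) (ha : ∀ x ∈ a, x ∈ setI)
    (hfull : FullSeq a)
    (b : ℂ) (hbG : IsGaussInt b) (hb2 : 2 * Real.sqrt 2 ≤ ‖b‖) (hbim : 1 ≤ b.im)
    (k : ℕ) (hk : 1 ≤ k)
    (z : ℂ) (hz : z ∈ cylinder (a ++ vSeq k ++ [b])) :
    ddiff z (contP (a ++ vSeq k) / contQ (a ++ vSeq k)) = 3 * k + 2 := by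
  classical
  obtain ⟨hzfund, hzq⟩ := hz
  set n := a.length with hn
  set L := n + (2+4*k) with hL
  have hvl : (vSeq k).length = 2+4*k := vSeq_length k
  have hvtl : (vtSeq k).length = 2+4*k := vtSeq_length k
  have hLen1 : (a ++ vSeq k).length = L := by simp [hvl, hL, hn]
  have hent_a : ∀ x ∈ a, IsGaussInt x ∧ x ≠ 0 := by
    intro x hx
    obtain ⟨hg, habs⟩ := ha x hx
    refine ⟨hg, fun h0 => ?_⟩
    rw [h0] at habs
    simp at habs
    have := Real.sqrt_pos.mpr (by norm_num : (0:ℝ) < 2)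
    linarith
  set t₀ := cfF (vtSeq k) 0 with ht₀
  have ht₀fund : t₀ ∈ fund := vt_fund k
  have hmem : t₀ ∈ proto a := by rw [hfull]; exact ht₀fund
  obtain ⟨z', hz'cyl, hz'it⟩ := hmem
  obtain ⟨hz'fund, hz'q⟩ := hz'cyl
  have hz'qa : ∀ j, (hj : j < a.length) → hA z' j = a[j] := fun j hj => by
    simpa using hz'q ⟨j, hj⟩
  have hiter : ∀ m ≤ n, hT^[m] z' = cfF (a.drop m) t₀ := by
    intro m hm
    rw [← hz'it]
    exact expand_along a z' hz'qa (fun x hx => (hent_a x hx).2) m hm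
  have hvtq := cfF_quotients (vtSeq k) 0 zero_mem_fund (ent_vt k) (vt_suffix k)
  set u := a ++ vtSeq k with hu
  have hul : u.length = L := by simp [hu, hvtl, hL, hn]
  have hsuf : ∀ m, 1 ≤ m → m ≤ u.length → cfF (u.drop m) 0 ∈ fund := by
    intro m hm1 hm2
    rcases le_or_gt m n with h | h
    · have hdrop : u.drop m = a.drop m ++ vtSeq k := by
        rw [hu, List.drop_append, Nat.sub_eq_zero_of_le h, List.drop_zero]
      rw [hdrop, cfF_append, ← ht₀, ← hiter m h]
      rcases m with _ | m
      · exact hz'fund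
      · rw [Function.iterate_succ_apply']
        exact hT_mem_fund _
    · have hdrop : u.drop m = (vtSeq k).drop (m - n) := by
        rw [hu, List.drop_append, List.drop_eq_nil_of_le (le_of_lt h)]
        simp [hn]
      rw [hdrop]
      exact vt_suffix k (m-n) (by omega) (by rw [hvtl]; rw [hul] at hm2; omega)
  have hent_u : ∀ x ∈ u, IsGaussInt x ∧ x ≠ 0 := by
    intro x hx
    rcases List.mem_append.mp hx with h | h
    exacts [hent_a x h, ent_vt k x h]
  obtain ⟨hQne, hPQ⟩ := valEq u hent_u hsuf
  have hcf_u : cfF u 0 = z' := by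
    rw [hu, cfF_append, ← ht₀]
    have := hiter 0 (Nat.zero_le n)
    simpa using this.symm
  have hval : contP u / contQ u = z' := by
    rw [hPQ, hcf_u]
    field_simp
  obtain ⟨hsP, hsQ⟩ := cont_sign k
  have hPa : contP (a ++ vSeq k) = (-1:ℂ)^(k+1) * contP u := by
    rw [hu, contP_app, contP_app, hsP, hsQ]; ring
  have hQa : contQ (a ++ vSeq k) = (-1:ℂ)^(k+1) * contQ u := by
    rw [hu, contQ_app, contQ_app, hsP, hsQ]; ring
  have heps : ((-1:ℂ)^(k+1)) ≠ 0 := pow_ne_zero _ (by norm_num)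
  have hw : contP (a ++ vSeq k) / contQ (a ++ vSeq k) = z' := by
    rw [hPa, hQa, mul_div_mul_left _ _ heps]
    exact hval
  rw [hw]
  -- quotients of z' beyond n
  have hz'q2 : ∀ j, (hj : j < 2+4*k) → hA z' (n+j) = (vtSeq k)[j]'(by rw [hvtl]; omega) := by
    intro j hj
    have hsplit : hA z' (n+j) = hA (hT^[n] z') j := by
      rw [hA, hA]
      congr 1
      rw [add_comm, Function.iterate_add_apply]
    rw [hsplit, hz'it]
    exact hvtq.2 j (by rw [hvtl]; omega)
  have hTL : hT^[L] z' = 0 := by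
    have hsp : hT^[(2+4*k)+n] z' = hT^[2+4*k] (hT^[n] z') := Function.iterate_add_apply _ _ _ _
    rw [show L = (2+4*k)+n by omega, hsp, hz'it]
    have h1 := hvtq.1 (2+4*k) (by rw [hvtl])
    rw [← ht₀] at h1
    rw [h1, show (2+4*k) = (vtSeq k).length by rw [hvtl], List.drop_length]
    rfl
  have hTne : ∀ N, N < L → hT^[N] z' ≠ 0 := by
    intro N hN h0
    have hA0 : hA z' N = 0 := hA_eq_zero h0
    rcases Nat.lt_or_ge N n with h | h
    · rw [hz'qa N h] at hA0
      exact (hent_a _ (List.getElem_mem _)).2 hA0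
    · have hj : N - n < 2+4*k := by omega
      have hq2 := hz'q2 (N-n) hj
      rw [show n + (N-n) = N by omega] at hq2
      rw [hq2] at hA0
      exact (ent_vt k _ (List.getElem_mem _)).2 hA0
  have hlen : hcfLength z' = L := by
    apply le_antisymm
    · exact Nat.sInf_le hTL
    · apply le_csInf ⟨L, hTL⟩
      intro m hm
      by_contra hcon
      push_neg at hcon
      exact hTne m hcon hm
  have hAw : ∀ j, (hj : j < L) → hA z' j = u[j]'(by rw [hul]; exact hj) := by
    intro j hj
    rcases Nat.lt_or_ge j n with h | h
    · rw [hz'qa j h]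
      exact (List.getElem_append_left h).symm
    · have hj2 : j - n < 2+4*k := by omega
      have hq2 := hz'q2 (j-n) hj2
      rw [show n + (j-n) = j by omega] at hq2
      rw [hq2]
      exact (List.getElem_append_right h).symm
  have hAz : ∀ j, (hj : j < L) → hA z j = (a ++ vSeq k)[j]'(by rw [hLen1]; exact hj) := by
    intro j hj
    have hjlen : j < (a ++ vSeq k ++ [b]).length := by
      rw [List.length_append, hLen1]
      simp
      omega
    have := hzq ⟨j, hjlen⟩
    simp only [List.get_eq_getElem] at this
    rw [this]
    exact List.getElem_append_left (by rw [hLen1]; exact hj)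
  unfold ddiff
  rw [hlen]
  have hset : {nn : ℕ | nn < L ∧ hA z nn ≠ hA z' nn} =
      ↑((Finset.range L).filter (fun nn => n ≤ nn ∧ Pf (nn - n))) := by
    ext nn
    simp only [Set.mem_setOf_eq, Finset.coe_filter, Finset.mem_range]
    constructor
    · rintro ⟨hlt, hne⟩
      refine ⟨hlt, ?_⟩
      rcases Nat.lt_or_ge nn n with h | h
      · exfalso
        apply hne
        rw [hAz nn hlt, hAw nn hlt, List.getElem_append_left h, List.getElem_append_left h]
      · refine ⟨h, ?_⟩
        rw [hAz nn hlt, hAw nn hlt, List.getElem_append_right h, List.getElem_append_right h] at hne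
        exact (entries_ne_iff k (nn-n) (by rw [hvl]; omega) (by rw [hvtl]; omega)).mp hne
    · rintro ⟨hlt, hge, hPf⟩
      refine ⟨hlt, ?_⟩
      rw [hAz nn hlt, hAw nn hlt, List.getElem_append_right hge, List.getElem_append_right hge]
      exact (entries_ne_iff k (nn-n) (by rw [hvl]; omega) (by rw [hvtl]; omega)).mpr hPf
  rw [hset, Set.ncard_coe_finset]
  have himg : (Finset.range L).filter (fun nn => n ≤ nn ∧ Pf (nn - n)) =
      Finset.image (fun j => n + j) ((Finset.range (2+4*k)).filter Pf) := by
    ext nn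
    simp only [Finset.mem_filter, Finset.mem_range, Finset.mem_image]
    constructor
    · rintro ⟨h1, h2, h3⟩
      exact ⟨nn - n, ⟨by omega, h3⟩, by omega⟩
    · rintro ⟨j, ⟨hj1, hj2⟩, rfl⟩
      refine ⟨by omega, by omega, ?_⟩
      simpa [Nat.add_sub_cancel_left] using hj2
  rw [himg, Finset.card_image_of_injective _ (fun x y h => by omega), count_lemma]
end
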